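/- arXiv:1411.4067 — 7 statements merged into one kernel-verified Lean document; each statement's English description precedes it below -/
import Mathlib

section
/- Let p be a prime, F = F_p, and n ≥ 2. Every function f : F^n → F defined by a canonical datum (any choice of r, partition A_1,…,A_r, segments S_1,…,S_n, and constants B_1,…,B_{r+1} satisfying the stated conditions) is a nested canalizing function. -/
/-- A proper nonempty subset `S` of `F_p` is a segment if `S = {0,…,j}` or
`F∖S = {0,…,j}` for some `0 ≤ j < p-1`. -/
def IsSegment (p : ℕ) (S : Finset (ZMod p)) : Prop :=
  ∃ j : ℕ, j < p - 1 ∧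
    ((∀ x : ZMod p, x ∈ S ↔ x.val ≤ j) ∨ (∀ x : ZMod p, x ∈ S ↔ ¬ x.val ≤ j))

/-- The indicator function `Q_S` of the complement of `S`: `0` on `S`, `1` off `S`. -/
def Qind (p : ℕ) (S : Finset (ZMod p)) (x : ZMod p) : ZMod p :=
  if x ∈ S then 0 else 1

/-- `f` is nested canalizing in the variable order `x_{σ(1)},…,x_{σ(n)}` with canalizing
input sets `S₁,…,Sₙ` (segments) and canalized outputs `b₁,…,bₙ` together with the final
output `bout = b_{n+1}`:  `f x = b i` where `i` is the least index with `x (σ i) ∈ S i`,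
and `f x = bout` if no such index exists. -/
def NestedWith (p n : ℕ) (f : (Fin n → ZMod p) → ZMod p) (σ : Equiv.Perm (Fin n))
    (S : Fin n → Finset (ZMod p)) (b : Fin n → ZMod p) (bout : ZMod p) : Prop :=
  (∀ i, IsSegment p (S i)) ∧
  (∀ x : Fin n → ZMod p, ∀ i : Fin n,
      x (σ i) ∈ S i → (∀ j : Fin n, j < i → x (σ j) ∉ S j) → f x = b i) ∧
  (∀ x : Fin n → ZMod p, (∀ i : Fin n, x (σ i) ∉ S i) → f x = bout)

/-- `f` is a nested canalizing function (NCF) if it is nested canalizing for some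
variable order, canalizing input sets and canalized outputs, with `b n ≠ b (n+1)`. -/
def IsNCF (p n : ℕ) (f : (Fin n → ZMod p) → ZMod p) : Prop :=
  ∃ (σ : Equiv.Perm (Fin n)) (S : Fin n → Finset (ZMod p)) (b : Fin n → ZMod p)
    (bout : ZMod p), (∀ h : n - 1 < n, b ⟨n - 1, h⟩ ≠ bout) ∧ NestedWith p n f σ S b bout

/-- `f` is `⟨i:a:b⟩` canalizing. -/
def IsCanalizing (p n : ℕ) (f : (Fin n → ZMod p) → ZMod p) (i : Fin n) (a b : ZMod p) :
    Prop :=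
  (∀ x, x i = a → f x = b) ∧ ¬ (∀ x, x i ≠ a → f x = b)

/-- A canonical datum in `n` variables: a layer number `r`, a partition `A₁,…,A_r` of the
variables into nonempty sets, segments `S₁,…,Sₙ`, and constants `B₁ ∈ F`,
`B₂,…,B_{r+1} ∈ F∖{0}` (here `B i` is `B_{i+1}`), with `B_r + B_{r+1} ≠ 0` if `|A_r| = 1`. -/
structure CanonicalDatum (p n : ℕ) where
  r : ℕ
  r_pos : 1 ≤ r
  r_le : r ≤ n
  A : Fin r → Finset (Fin n)
  A_nonempty : ∀ i, (A i).Nonempty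
  A_disjoint : ∀ i j, i ≠ j → Disjoint (A i) (A j)
  A_cover : ∀ v : Fin n, ∃ i, v ∈ A i
  S : Fin n → Finset (ZMod p)
  S_seg : ∀ j, IsSegment p (S j)
  B : Fin (r + 1) → ZMod p
  B_ne : ∀ i : Fin (r + 1), 0 < (i : ℕ) → B i ≠ 0
  last_cond : (A ⟨r - 1, Nat.sub_lt r_pos one_pos⟩).card = 1 →
      B ⟨r - 1, Nat.lt_succ_of_lt (Nat.sub_lt r_pos one_pos)⟩ + B ⟨r, Nat.lt_succ_self r⟩ ≠ 0

/-- Evaluation of the nested expression `M i * ( … ) + B i` with `fuel` layers left. -/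
def nestEvalAux (p : ℕ) (M B : ℕ → ZMod p) : ℕ → ℕ → ZMod p
  | 0, i => B i
  | k + 1, i => M i * nestEvalAux p M B k (i + 1) + B i

/-- The product of indicator functions of layer `i` (0-indexed), `M_{i+1}(x)`. -/
def CanonicalDatum.layer {p n : ℕ} (d : CanonicalDatum p n) (i : ℕ)
    (x : Fin n → ZMod p) : ZMod p :=
  if h : i < d.r then ∏ j ∈ d.A ⟨i, h⟩, Qind p (d.S j) (x j) else 1

/-- The constants of the datum as a function on `ℕ`. -/
def CanonicalDatum.Bn {p n : ℕ} (d : CanonicalDatum p n) (i : ℕ) : ZMod p :=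
  if h : i < d.r + 1 then d.B ⟨i, h⟩ else 0

/-- The function `f(x) = M₁(M₂(⋯(M_{r−1}(B_{r+1}M_r + B_r) + B_{r−1})⋯) + B₂) + B₁`
defined by a canonical datum. -/
def CanonicalDatum.eval {p n : ℕ} (d : CanonicalDatum p n) (x : Fin n → ZMod p) : ZMod p :=
  nestEvalAux p (fun i => d.layer i x) d.Bn d.r 0

/-- Stirling numbers of the second kind `S(n,k)`, characterized by
`k! · S(n,k) = ∑_{t=0}^{k} (−1)^t C(k,t) (k−t)^n`. -/
def stirling2 (n k : ℕ) : ℚ :=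
  (∑ t ∈ Finset.range (k + 1), (-1 : ℚ) ^ t * (k.choose t) * ((k - t : ℕ) : ℚ) ^ n) /
    k.factorial

/-- The number of nested canalizing functions `f : F_p^n → F_p`. -/
noncomputable def NCFcount (p n : ℕ) : ℕ :=
  Set.ncard {f : (Fin n → ZMod p) → ZMod p | IsNCF p n f}


lemma nest_sum (p : ℕ) (M B : ℕ → ZMod p) :
    ∀ k s, (∀ j, s ≤ j → j < s + k → M j = 1) →
    nestEvalAux p M B k s = ∑ j ∈ Finset.range (k+1), B (s + j) := by
  intro k
  induction k with
  | zero => intro s _; simp [nestEvalAux]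
  | succ k ih =>
    intro s h1
    rw [nestEvalAux, h1 s le_rfl (by omega), one_mul,
      ih (s+1) (fun j hj hj' => h1 j (by omega) (by omega)),
      Finset.sum_range_succ' (fun j => B (s + j))]
    simp only [Nat.add_zero]
    congr 1
    exact Finset.sum_congr rfl (fun j _ => by ring_nf)

lemma nest_zero (p : ℕ) (M B : ℕ → ZMod p) :
    ∀ k s l, s ≤ l → l < s + k → (∀ j, s ≤ j → j < l → M j = 1) → M l = 0 →
    nestEvalAux p M B k s = ∑ j ∈ Finset.range (l - s + 1), B (s + j) := by
  intro k
  induction k with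
  | zero => intro s l h1 h2; omega
  | succ k ih =>
    intro s l hsl hlk h1 h0
    rcases eq_or_lt_of_le hsl with rfl | hlt
    · rw [nestEvalAux, h0, zero_mul, zero_add]
      simp
    · rw [nestEvalAux, h1 s le_rfl hlt, one_mul,
        ih (s+1) l (by omega) (by omega) (fun j hj hj' => h1 j (by omega) hj') h0,
        show l - s + 1 = (l - (s+1) + 1) + 1 by omega,
        Finset.sum_range_succ' (fun j => B (s + j))]
      simp only [Nat.add_zero]
      congr 1
      exact Finset.sum_congr rfl (fun j _ => by ring_nf)

/-- every function defined by a canonical datum is a nested canalizing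
function. -/
theorem stmt1 (p n : ℕ) [Fact (Nat.Prime p)] (hn : 2 ≤ n) (d : CanonicalDatum p n) :
    IsNCF p n d.eval := by
  classical
  choose L hLmem using d.A_cover
  have hLuniq : ∀ (v : Fin n) (i : Fin d.r), v ∈ d.A i → i = L v := by
    intro v i hv
    by_contra h
    exact Finset.disjoint_left.mp (d.A_disjoint i (L v) h) hv (hLmem v)
  set σ := Tuple.sort L with hσ
  have hmono : Monotone (L ∘ σ) := Tuple.monotone_sort L
  -- key: if L (σ j) < L (σ i) then j < i
  have hlt : ∀ i j : Fin n, L (σ j) < L (σ i) → j < i := by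
    intro i j h
    by_contra hc
    exact absurd (hmono (not_lt.mp hc)) (not_le.mpr h)
  refine ⟨σ, fun i => d.S (σ i),
    fun i => ∑ j ∈ Finset.range ((L (σ i)).val + 1), d.Bn j,
    ∑ j ∈ Finset.range (d.r + 1), d.Bn j, ?_, fun i => d.S_seg (σ i), ?_, ?_⟩
  · -- b (n-1) ≠ bout
    intro h
    have hmax : (L (σ ⟨n - 1, h⟩)).val = d.r - 1 := by
      have h1 : (L (σ ⟨n - 1, h⟩)).val < d.r := (L (σ ⟨n - 1, h⟩)).isLt
      have h2 : (⟨d.r - 1, Nat.sub_lt d.r_pos one_pos⟩ : Fin d.r) ≤ L (σ ⟨n - 1, h⟩) := by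
        obtain ⟨v, hv⟩ := d.A_nonempty ⟨d.r - 1, Nat.sub_lt d.r_pos one_pos⟩
        have hLv := hLuniq v _ hv
        have : σ.symm v ≤ ⟨n - 1, h⟩ := by
          have h5 := (σ.symm v).isLt
          rw [Fin.le_def]
          simp only [Fin.val_mk]
          omega
        calc (⟨d.r - 1, _⟩ : Fin d.r) = L (σ (σ.symm v)) := by rw [Equiv.apply_symm_apply, ← hLv]
          _ ≤ L (σ ⟨n - 1, h⟩) := hmono this
      have h6 := Fin.le_def.mp h2
      simp only [Fin.val_mk] at h6
      omega
    show (∑ j ∈ Finset.range ((L (σ ⟨n - 1, h⟩)).val + 1), d.Bn j) ≠ _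
    rw [hmax]
    have hr1 : d.r - 1 + 1 = d.r := by have := d.r_pos; omega
    rw [hr1, Finset.sum_range_succ]
    intro hcontra
    have hBn : d.Bn d.r ≠ 0 := by
      rw [CanonicalDatum.Bn, dif_pos (Nat.lt_succ_self d.r)]
      exact d.B_ne ⟨d.r, Nat.lt_succ_self d.r⟩ d.r_pos
    exact hBn (by linear_combination -hcontra)
  · -- canalizing cases
    intro x i hin hprev
    set l := L (σ i) with hldef
    have hlr : l.val < d.r := l.isLt
    have heval : d.eval x = ∑ j ∈ Finset.range (l.val - 0 + 1), d.Bn (0 + j) := by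
      refine nest_zero p _ _ d.r 0 l.val (Nat.zero_le _) (by omega) ?_ ?_
      · intro m hm hml
        have hmr : m < d.r := by omega
        rw [CanonicalDatum.layer, dif_pos hmr]
        refine Finset.prod_eq_one (fun v hv => ?_)
        have hLv : (⟨m, hmr⟩ : Fin d.r) = L v := hLuniq v _ hv
        have hjlt : σ.symm v < i := by
          refine hlt i (σ.symm v) ?_
          rw [Equiv.apply_symm_apply, ← hLv, ← hldef]
          exact Fin.mk_lt_of_lt_val hml
        have hns : x v ∉ d.S v := by simpa using hprev (σ.symm v) hjlt
        rw [Qind, if_neg hns]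
      · rw [CanonicalDatum.layer, dif_pos hlr]
        refine Finset.prod_eq_zero (i := σ i) ?_ ?_
        · have : (⟨l.val, hlr⟩ : Fin d.r) = l := rfl
          rw [this]; exact hLmem (σ i)
        · rw [Qind, if_pos hin]
    rw [heval]
    simp [hldef]
  · -- all outside
    intro x hout
    have heval : d.eval x = ∑ j ∈ Finset.range (d.r + 1), d.Bn (0 + j) := by
      refine nest_sum p _ _ d.r 0 (fun m _ hm => ?_)
      rw [CanonicalDatum.layer, dif_pos (by omega : m < d.r)]
      refine Finset.prod_eq_one (fun v hv => ?_)
      have hns : x v ∉ d.S v := by simpa using hout (σ.symm v)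
      rw [Qind, if_neg hns]
    rw [heval]
    simp
end

section
/- Let p be a prime, F = F_p, and n ≥ 2. Every nested canalizing function f : F^n → F is defined by some canonical datum, i.e., there exist r, a partition A_1,…,A_r of {1,…,n} into nonempty sets, segments S_1,…,S_n of F, and constants B_1 ∈ F, B_2,…,B_{r+1} ∈ F∖{0} with B_r + B_{r+1} ≠ 0 whenever |A_r| = 1, such that f(x) = M_1(M_2(⋯(M_{r−1}(B_{r+1}M_r + B_r) + B_{r−1})⋯) + B_2) + B_1, where M_i(x) = ∏_{j∈A_i} Q_{S_j}(x_j). -/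
section NCFProof

variable {p n : ℕ}

/-- Sequence of canalized outputs extended by `bout`. -/
def cseq (b : Fin n → ZMod p) (bout : ZMod p) (i : ℕ) : ZMod p :=
  if h : i < n then b ⟨i, h⟩ else bout

/-- Downward evaluation with fuel. -/
def Gaux (σ : Equiv.Perm (Fin n)) (S : Fin n → Finset (ZMod p)) (b : Fin n → ZMod p)
    (bout : ZMod p) (x : Fin n → ZMod p) : ℕ → ℕ → ZMod p
  | 0, _ => bout
  | k+1, i =>
      if h : i < n then
        (if x (σ ⟨i, h⟩) ∈ S ⟨i, h⟩ then b ⟨i, h⟩ else Gaux σ S b bout x k (i+1))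
      else bout

/-- `Gf x i` : output of the nested canalizing rule starting from index `i`. -/
def Gf (σ : Equiv.Perm (Fin n)) (S : Fin n → Finset (ZMod p)) (b : Fin n → ZMod p)
    (bout : ZMod p) (x : Fin n → ZMod p) (i : ℕ) : ZMod p :=
  Gaux σ S b bout x (n - i) i

lemma Gf_top (σ : Equiv.Perm (Fin n)) (S : Fin n → Finset (ZMod p)) (b : Fin n → ZMod p)
    (bout : ZMod p) (x : Fin n → ZMod p) (i : ℕ) (h : n ≤ i) :
    Gf σ S b bout x i = bout := by
  have h0 : n - i = 0 := by omega
  rw [Gf, h0]; rfl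

lemma Gf_step (σ : Equiv.Perm (Fin n)) (S : Fin n → Finset (ZMod p)) (b : Fin n → ZMod p)
    (bout : ZMod p) (x : Fin n → ZMod p) (i : ℕ) (h : i < n) :
    Gf σ S b bout x i =
      if x (σ ⟨i, h⟩) ∈ S ⟨i, h⟩ then b ⟨i, h⟩ else Gf σ S b bout x (i+1) := by
  have h1 : n - i = (n - (i+1)) + 1 := by omega
  rw [Gf, h1, Gaux, dif_pos h]
  rfl

lemma f_eq_Gf {f : (Fin n → ZMod p) → ZMod p} {σ : Equiv.Perm (Fin n)}
    {S : Fin n → Finset (ZMod p)} {b : Fin n → ZMod p} {bout : ZMod p}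
    (hN : NestedWith p n f σ S b bout) (x : Fin n → ZMod p) :
    f x = Gf σ S b bout x 0 := by
  obtain ⟨-, h2, h3⟩ := hN
  have key : ∀ m i, n - i ≤ m → (∀ j : Fin n, (j : ℕ) < i → x (σ j) ∉ S j) →
      f x = Gf σ S b bout x i := by
    intro m
    induction m with
    | zero =>
      intro i hi hj
      rw [Gf_top σ S b bout x i (by omega)]
      exact h3 x fun j => hj j (lt_of_lt_of_le j.isLt (by omega))
    | succ m ih =>
      intro i hi hj
      by_cases h : i < n
      · rw [Gf_step σ S b bout x i h]
        by_cases hx : x (σ ⟨i, h⟩) ∈ S ⟨i, h⟩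
        · rw [if_pos hx]
          exact h2 x ⟨i, h⟩ hx fun j hji => hj j hji
        · rw [if_neg hx]
          refine ih (i+1) (by omega) ?_
          intro j hji
          rcases Nat.lt_or_ge (j : ℕ) i with h' | h'
          · exact hj j h'
          · have hje : j = ⟨i, h⟩ := by
              apply Fin.ext
              show (j : ℕ) = i
              omega
            rw [hje]; exact hx
      · rw [Gf_top σ S b bout x i (by omega)]
        exact h3 x fun j => hj j (lt_of_lt_of_le j.isLt (by omega))
  exact key n 0 (by omega) (fun j h => absurd h (by omega))

lemma IsSegment.compl {S : Finset (ZMod p)} [NeZero p] (h : IsSegment p S) :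
    IsSegment p Sᶜ := by
  obtain ⟨j, hj, h1 | h1⟩ := h
  · exact ⟨j, hj, Or.inr fun x => by simp [Finset.mem_compl, h1 x]⟩
  · exact ⟨j, hj, Or.inl fun x => by simp [Finset.mem_compl, h1 x]⟩

/-- the `k`-th endpoint (default `n-1`). -/
def eNat (n : ℕ) (E : Finset ℕ) (k : ℕ) : ℕ :=
  if h : k < E.card then E.orderEmbOfFin rfl ⟨k, h⟩ else n - 1

/-- the `k`-th block start. -/
def sNat (n : ℕ) (E : Finset ℕ) (k : ℕ) : ℕ :=
  if k = 0 then 0 else eNat n E (k-1) + 1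

/-- the indices (in canalizing order) of block `k`, as a finset of `Fin n`. -/
def Jset (n : ℕ) (s t : ℕ) : Finset (Fin n) :=
  Finset.univ.filter fun i => s ≤ (i : ℕ) ∧ (i : ℕ) ≤ t

/-- the canonical constants. -/
def BNseq (b : Fin n → ZMod p) (bout : ZMod p) (E : Finset ℕ) (k : ℕ) : ZMod p :=
  if k = 0 then cseq b bout 0
  else cseq b bout (eNat n E (k-1) + 1) - cseq b bout (eNat n E (k-1))

lemma main_construct (p n : ℕ) [Fact (Nat.Prime p)] (hn : 2 ≤ n)
    (f : (Fin n → ZMod p) → ZMod p)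
    (σ : Equiv.Perm (Fin n)) (S : Fin n → Finset (ZMod p)) (b : Fin n → ZMod p)
    (bout : ZMod p) (hN : NestedWith p n f σ S b bout)
    (hb : b ⟨n-1, by omega⟩ ≠ bout)
    (hgood : b ⟨n-2, by omega⟩ = b ⟨n-1, by omega⟩ ∨ bout ≠ b ⟨n-2, by omega⟩) :
    ∃ d : CanonicalDatum p n, ∀ x, f x = d.eval x := by
  classical
  have hfG : ∀ x, f x = Gf σ S b bout x 0 := f_eq_Gf hN
  set c : ℕ → ZMod p := cseq b bout with hcdef
  have hcn : c n = bout := by simp [hcdef, cseq]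
  have hclt : ∀ i (h : i < n), c i = b ⟨i, h⟩ := by intro i h; simp [hcdef, cseq, h]
  set E : Finset ℕ := (Finset.range n).filter (fun i => c (i+1) ≠ c i) with hEdef
  have hmemE : ∀ i, i ∈ E ↔ i < n ∧ c (i+1) ≠ c i := by intro i; simp [hEdef]
  have hn1E : n - 1 ∈ E := by
    rw [hmemE]
    refine ⟨by omega, ?_⟩
    rw [show n - 1 + 1 = n by omega, hcn, hclt (n-1) (by omega)]
    exact fun h => hb h.symm
  have hr1 : 1 ≤ E.card := Finset.card_pos.mpr ⟨n-1, hn1E⟩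
  have hrn : E.card ≤ n := by
    have h : E ⊆ Finset.range n := by rw [hEdef]; exact Finset.filter_subset _ _
    calc E.card ≤ (Finset.range n).card := Finset.card_le_card h
      _ = n := Finset.card_range n
  have heN_lt : ∀ k, eNat n E k < n := by
    intro k
    rw [eNat]
    split
    · next h =>
      have hmem := Finset.orderEmbOfFin_mem E rfl ⟨k, h⟩
      rw [hmemE] at hmem
      exact hmem.1
    · omega
  have heN_mem : ∀ k, k < E.card → eNat n E k ∈ E := by
    intro k h
    rw [eNat, dif_pos h]
    exact Finset.orderEmbOfFin_mem E rfl ⟨k, h⟩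
  have heN_mono : ∀ k l, k < l → l < E.card → eNat n E k < eNat n E l := by
    intro k l hkl hl
    rw [eNat, eNat, dif_pos hl, dif_pos (lt_trans hkl hl)]
    exact (E.orderEmbOfFin rfl).strictMono (show ((⟨k, lt_trans hkl hl⟩ : Fin E.card)) < ⟨l, hl⟩ from hkl)
  have heN_mono_le : ∀ k l, k ≤ l → l < E.card → eNat n E k ≤ eNat n E l := by
    intro k l h hl
    rcases Nat.eq_or_lt_of_le h with h | h
    · rw [h]
    · exact le_of_lt (heN_mono k l h hl)
  have hmax : ∀ hne : E.Nonempty, E.max' hne = n - 1 := by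
    intro hne
    refine le_antisymm (Finset.max'_le _ _ _ fun y hy => ?_) (Finset.le_max' _ _ hn1E)
    rw [hmemE] at hy
    omega
  have hlast : eNat n E (E.card - 1) = n - 1 := by
    rw [eNat, dif_pos (by omega)]
    have h := Finset.orderEmbOfFin_last (s := E) rfl (by omega)
    exact h.trans (hmax _)
  have hsN0 : sNat n E 0 = 0 := rfl
  have hsN_succ : ∀ k, sNat n E (k+1) = eNat n E k + 1 := by
    intro k
    rw [sNat, if_neg (Nat.succ_ne_zero k), Nat.add_sub_cancel]
  have hsN_le : ∀ k, k < E.card → sNat n E k ≤ eNat n E k := by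
    intro k hk
    cases k with
    | zero => rw [hsN0]; omega
    | succ k' =>
      rw [hsN_succ]
      have := heN_mono k' (k'+1) (by omega) hk
      omega
  have hsNr : sNat n E E.card = n := by
    rw [show E.card = (E.card - 1) + 1 by omega, hsN_succ, hlast]
    omega
  have hnogap : ∀ k, k < E.card → ∀ j ∈ E, j < eNat n E k → j < sNat n E k := by
    intro k hk j hj hjlt
    have hrange := Finset.range_orderEmbOfFin E (rfl : E.card = E.card)
    have hjr : j ∈ Set.range (E.orderEmbOfFin rfl) := by rw [hrange]; exact hj
    obtain ⟨m, hm⟩ := hjr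
    rw [eNat, dif_pos hk] at hjlt
    have hmub : (m : ℕ) < k := by
      by_contra h
      push_neg at h
      have h2 : (⟨k, hk⟩ : Fin E.card) ≤ m := h
      have h3 := (E.orderEmbOfFin rfl).monotone h2
      rw [hm] at h3
      omega
    cases k with
    | zero => omega
    | succ k' =>
      rw [hsN_succ, eNat, dif_pos (show k' < E.card by omega)]
      have h3 : m ≤ (⟨k', by omega⟩ : Fin E.card) := by
        rw [Fin.le_def]
        simp
        omega
      have h4 := (E.orderEmbOfFin rfl).monotone h3
      rw [hm] at h4
      omega
  have hconst : ∀ k, k < E.card → ∀ i, sNat n E k ≤ i → i ≤ eNat n E k → c i = c (sNat n E k) := by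
    intro k hk
    have step : ∀ i, sNat n E k ≤ i → i < eNat n E k → c (i+1) = c i := by
      intro i h1 h2
      by_contra hne
      have hiE : i ∈ E := by
        rw [hmemE]
        exact ⟨by have := heN_lt k; omega, hne⟩
      have := hnogap k hk i hiE h2
      omega
    have key : ∀ m, sNat n E k + m ≤ eNat n E k → c (sNat n E k + m) = c (sNat n E k) := by
      intro m
      induction m with
      | zero => intro _; rfl
      | succ m ih =>
        intro hm
        have h3 := step (sNat n E k + m) (by omega) (by omega)
        rw [show sNat n E k + (m+1) = (sNat n E k + m) + 1 by omega, h3, ih (by omega)]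
    intro i h1 h2
    have := key (i - sNat n E k) (by omega)
    rwa [show sNat n E k + (i - sNat n E k) = i by omega] at this
  -- the block lemma
  have block : ∀ x t, t < n → ∀ m s, t - s = m → s ≤ t →
      (∀ i, s ≤ i → i ≤ t → c i = c s) →
      Gf σ S b bout x s = c s +
        (∏ i ∈ Jset n s t, Qind p (S i) (x (σ i))) * (Gf σ S b bout x (t+1) - c s) := by
    intro x t ht m
    induction m with
    | zero =>
      intro s hm hst hcs
      have hseq : s = t := by omega
      subst hseq
      have hsn : s < n := by omega
      have hJ : Jset n s s = {(⟨s, hsn⟩ : Fin n)} := by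
        ext i
        simp only [Jset, Finset.mem_filter, Finset.mem_univ, true_and, Finset.mem_singleton,
          Fin.ext_iff]
        omega
      rw [hJ, Finset.prod_singleton, Gf_step σ S b bout x s hsn]
      by_cases hx : x (σ ⟨s, hsn⟩) ∈ S ⟨s, hsn⟩
      · rw [if_pos hx, Qind, if_pos hx, hclt s hsn]
        ring
      · rw [if_neg hx, Qind, if_neg hx]
        ring
    | succ m ih =>
      intro s hm hst hcs
      have hslt : s < t := by omega
      have hsn : s < n := by omega
      have hins : Jset n s t = insert (⟨s, hsn⟩ : Fin n) (Jset n (s+1) t) := by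
        ext i
        simp only [Jset, Finset.mem_filter, Finset.mem_univ, true_and, Finset.mem_insert,
          Fin.ext_iff]
        omega
      have hnotmem : (⟨s, hsn⟩ : Fin n) ∉ Jset n (s+1) t := by
        simp [Jset]
      rw [hins, Finset.prod_insert hnotmem]
      have hcs1 : c (s+1) = c s := hcs (s+1) (by omega) (by omega)
      have hih := ih (s+1) (by omega) (by omega)
        (fun i h1 h2 => (hcs i (by omega) h2).trans hcs1.symm)
      rw [Gf_step σ S b bout x s hsn]
      by_cases hx : x (σ ⟨s, hsn⟩) ∈ S ⟨s, hsn⟩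
      · rw [if_pos hx, Qind, if_pos hx, hclt s hsn]
        ring
      · rw [if_neg hx, Qind, if_neg hx, hih, hcs1]
        ring
  -- BN computational lemmas
  have hBN0 : BNseq b bout E 0 = c 0 := by
    rw [BNseq, if_pos rfl, ← hcdef]
  have hBNsucc : ∀ k, BNseq b bout E (k+1) = c (eNat n E k + 1) - c (eNat n E k) := by
    intro k
    rw [BNseq, if_neg (Nat.succ_ne_zero k), Nat.add_sub_cancel, ← hcdef]
  -- datum fields
  have hAnon : ∀ k : Fin E.card,
      ((Jset n (sNat n E (k:ℕ)) (eNat n E (k:ℕ))).image σ).Nonempty := by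
    intro k
    refine ⟨σ ⟨eNat n E (k:ℕ), heN_lt _⟩, Finset.mem_image_of_mem σ ?_⟩
    simp only [Jset, Finset.mem_filter, Finset.mem_univ, true_and]
    exact ⟨hsN_le _ k.isLt, le_refl _⟩
  have hAdis : ∀ k l : Fin E.card, k ≠ l →
      Disjoint ((Jset n (sNat n E (k:ℕ)) (eNat n E (k:ℕ))).image σ)
        ((Jset n (sNat n E (l:ℕ)) (eNat n E (l:ℕ))).image σ) := by
    intro k l hkl
    rw [Finset.disjoint_image (Equiv.injective σ), Finset.disjoint_left]
    intro i hik hil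
    simp only [Jset, Finset.mem_filter, Finset.mem_univ, true_and] at hik hil
    have key : ∀ a b' : Fin E.card, (a:ℕ) < (b':ℕ) → (i:ℕ) ≤ eNat n E (a:ℕ) →
        sNat n E (b':ℕ) ≤ (i:ℕ) → False := by
      intro a b' hab h1 h2
      have hle : eNat n E (a:ℕ) ≤ eNat n E ((b':ℕ)-1) :=
        heN_mono_le _ _ (by omega) (by have := b'.isLt; omega)
      rw [show (b':ℕ) = ((b':ℕ)-1)+1 by omega, hsN_succ] at h2
      omega
    rcases Nat.lt_or_ge (k:ℕ) (l:ℕ) with h | h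
    · exact key k l h hik.2 hil.1
    · rcases Nat.eq_or_lt_of_le h with h' | h'
      · exact hkl (Fin.ext h'.symm)
      · exact key l k h' hil.2 hik.1
  have hAcov : ∀ v : Fin n, ∃ k : Fin E.card,
      v ∈ (Jset n (sNat n E (k:ℕ)) (eNat n E (k:ℕ))).image σ := by
    intro v
    have hvn : ((σ.symm v : Fin n) : ℕ) < n := (σ.symm v).isLt
    have hex : ∃ k, k < E.card ∧ ((σ.symm v : Fin n) : ℕ) ≤ eNat n E k :=
      ⟨E.card - 1, by omega, by rw [hlast]; omega⟩
    have hk0r : Nat.find hex < E.card := (Nat.find_spec hex).1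
    have hk0le : ((σ.symm v : Fin n) : ℕ) ≤ eNat n E (Nat.find hex) := (Nat.find_spec hex).2
    have hs : sNat n E (Nat.find hex) ≤ ((σ.symm v : Fin n) : ℕ) := by
      rcases Nat.eq_zero_or_pos (Nat.find hex) with h0 | h0
      · rw [h0, hsN0]; omega
      · have hmin := Nat.find_min hex (m := Nat.find hex - 1) (by omega)
        push_neg at hmin
        have h2 := hmin (by omega)
        rw [show Nat.find hex = (Nat.find hex - 1) + 1 by omega, hsN_succ]
        omega
    refine ⟨⟨Nat.find hex, hk0r⟩, ?_⟩
    rw [Finset.mem_image]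
    refine ⟨σ.symm v, ?_, Equiv.apply_symm_apply σ v⟩
    simp only [Jset, Finset.mem_filter, Finset.mem_univ, true_and]
    exact ⟨hs, hk0le⟩
  have hBne : ∀ i : Fin (E.card + 1), 0 < (i:ℕ) → BNseq b bout E (i:ℕ) ≠ 0 := by
    intro i hi
    have hile : (i:ℕ) < E.card + 1 := i.isLt
    rw [show (i:ℕ) = ((i:ℕ)-1)+1 by omega, hBNsucc]
    have hmem := heN_mem ((i:ℕ)-1) (by omega)
    rw [hmemE] at hmem
    exact sub_ne_zero.mpr hmem.2
  have hlastc : ((Jset n (sNat n E (E.card-1)) (eNat n E (E.card-1))).image σ).card = 1 →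
      BNseq b bout E (E.card - 1) + BNseq b bout E E.card ≠ 0 := by
    intro hcard
    rw [Finset.card_image_of_injective _ (Equiv.injective σ)] at hcard
    have hsle : sNat n E (E.card-1) ≤ eNat n E (E.card-1) := hsN_le _ (by omega)
    have helt : eNat n E (E.card-1) < n := heN_lt _
    have h1 : (⟨sNat n E (E.card - 1), by omega⟩ : Fin n) ∈
        Jset n (sNat n E (E.card-1)) (eNat n E (E.card-1)) := by
      simp only [Jset, Finset.mem_filter, Finset.mem_univ, true_and]
      exact ⟨le_refl _, hsle⟩
    have h2 : (⟨eNat n E (E.card - 1), helt⟩ : Fin n) ∈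
        Jset n (sNat n E (E.card-1)) (eNat n E (E.card-1)) := by
      simp only [Jset, Finset.mem_filter, Finset.mem_univ, true_and]
      exact ⟨hsle, le_refl _⟩
    have heq := Finset.card_le_one.mp (le_of_eq hcard) _ h1 _ h2
    have hse : sNat n E (E.card - 1) = eNat n E (E.card - 1) := congrArg Fin.val heq
    rcases Nat.eq_or_lt_of_le hr1 with hr1' | hr2
    · exfalso
      rw [show E.card - 1 = 0 by omega, hsN0] at hse
      rw [show E.card - 1 = 0 by omega] at hlast
      omega
    · have he2 : eNat n E (E.card - 2) = n - 2 := by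
        have hs1 : sNat n E (E.card - 1) = eNat n E (E.card - 2) + 1 := by
          rw [show E.card - 1 = (E.card - 2) + 1 by omega, hsN_succ]
        omega
      have hmem2 := heN_mem (E.card - 2) (by omega)
      rw [hmemE, he2] at hmem2
      have hbne2 : bout ≠ b ⟨n-2, by omega⟩ := by
        rcases hgood with h | h
        · exfalso
          apply hmem2.2
          rw [show n - 2 + 1 = n - 1 by omega, hclt (n-1) (by omega), hclt (n-2) (by omega)]
          exact h.symm
        · exact h
      have hv1 : BNseq b bout E (E.card - 1) = c (n-1) - c (n-2) := by
        rw [show E.card - 1 = (E.card - 2) + 1 by omega, hBNsucc, he2,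
          show n - 2 + 1 = n - 1 by omega]
      have hv2 : BNseq b bout E E.card = c n - c (n-1) := by
        rw [show E.card = (E.card - 1) + 1 by omega, hBNsucc, hlast,
          show n - 1 + 1 = n by omega]
      rw [hv1, hv2, hcn, hclt (n-1) (by omega), hclt (n-2) (by omega)]
      intro hzero
      apply hbne2
      have hz2 : bout - b ⟨n-2, by omega⟩ = 0 := by linear_combination hzero
      have := sub_eq_zero.mp hz2
      exact this
  refine ⟨⟨E.card, hr1, hrn,
      (fun k => (Jset n (sNat n E (k:ℕ)) (eNat n E (k:ℕ))).image σ),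
      hAnon, hAdis, hAcov,
      (fun j => S (σ.symm j)), (fun j => hN.1 (σ.symm j)),
      (fun i => BNseq b bout E (i:ℕ)), hBne, hlastc⟩, ?_⟩
  intro x
  rw [hfG x]
  show Gf σ S b bout x 0 =
    nestEvalAux p
      (fun i => if h : i < E.card then
          ∏ j ∈ (Jset n (sNat n E i) (eNat n E i)).image σ, Qind p (S (σ.symm j)) (x j)
        else 1)
      (fun i => if h : i < E.card + 1 then BNseq b bout E i else 0) E.card 0
  have hlayer : ∀ k,
      (∏ j ∈ (Jset n (sNat n E k) (eNat n E k)).image σ, Qind p (S (σ.symm j)) (x j))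
        = ∏ i ∈ Jset n (sNat n E k) (eNat n E k), Qind p (S i) (x (σ i)) := by
    intro k
    rw [Finset.prod_image (fun a _ b' _ h => Equiv.injective σ h)]
    exact Finset.prod_congr rfl fun i _ => by rw [Equiv.symm_apply_apply]
  have key : ∀ m k, k + m = E.card →
      nestEvalAux p
        (fun i => if h : i < E.card then
            ∏ j ∈ (Jset n (sNat n E i) (eNat n E i)).image σ, Qind p (S (σ.symm j)) (x j)
          else 1)
        (fun i => if h : i < E.card + 1 then BNseq b bout E i else 0) m k
        = Gf σ S b bout x (sNat n E k) - c (sNat n E k) + BNseq b bout E k := by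
    intro m
    induction m with
    | zero =>
      intro k hk
      have hke : k = E.card := by omega
      subst hke
      rw [nestEvalAux, dif_pos (by omega), hsNr, Gf_top σ S b bout x n (le_refl n), hcn]
      ring
    | succ m ih =>
      intro k hk
      have hkr : k < E.card := by omega
      rw [nestEvalAux, ih (k+1) (by omega), dif_pos hkr, dif_pos (show k < E.card + 1 by omega),
        hlayer k, hsN_succ k, hBNsucc k]
      have hcc : c (eNat n E k) = c (sNat n E k) :=
        hconst k hkr (eNat n E k) (hsN_le k hkr) (le_refl _)
      rw [block x (eNat n E k) (heN_lt k) (eNat n E k - sNat n E k) (sNat n E k) rfl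
        (hsN_le k hkr) (hconst k hkr), hcc]
      ring
  have hfin := key E.card 0 (Nat.zero_add _)
  rw [show sNat n E 0 = 0 from rfl, hBN0] at hfin
  rw [hfin]
  ring

end NCFProof

/-- every nested canalizing function is defined by some canonical datum. -/
theorem stmt2 (p n : ℕ) [Fact (Nat.Prime p)] (hn : 2 ≤ n)
    (f : (Fin n → ZMod p) → ZMod p) (hf : IsNCF p n f) :
    ∃ d : CanonicalDatum p n, ∀ x, f x = d.eval x := by
  classical
  haveI : NeZero p := ⟨(Fact.out : p.Prime).ne_zero⟩
  obtain ⟨σ, S, b, bout, hbne, hN⟩ := hf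
  have h1 : n - 1 < n := by omega
  have h2 : n - 2 < n := by omega
  have hb : b ⟨n-1, h1⟩ ≠ bout := hbne h1
  by_cases hcase : b ⟨n-2, h2⟩ = bout
  · -- flip the last input set
    obtain ⟨hseg, hc2, hc3⟩ := hN
    set lst : Fin n := ⟨n-1, h1⟩ with hlst
    set S' : Fin n → Finset (ZMod p) := Function.update S lst (S lst)ᶜ with hS'
    set b' : Fin n → ZMod p := Function.update b lst bout with hb'
    have hlt_or_eq : ∀ i : Fin n, i < lst ∨ i = lst := by
      intro i
      rcases Nat.lt_or_ge (i : ℕ) (n-1) with h | h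
      · exact Or.inl h
      · refine Or.inr (Fin.ext ?_)
        show (i : ℕ) = n - 1
        omega
    have hS'ne : ∀ i : Fin n, i ≠ lst → S' i = S i := by
      intro i hi; simp [hS', Function.update_of_ne hi]
    have hb'ne : ∀ i : Fin n, i ≠ lst → b' i = b i := by
      intro i hi; simp [hb', Function.update_of_ne hi]
    refine main_construct p n hn f σ S' b' (b lst) ⟨?_, ?_, ?_⟩ ?_ ?_
    · intro i
      by_cases hi : i = lst
      · rw [hi]; simp only [hS', Function.update_self]; exact (hseg lst).compl
      · rw [hS'ne i hi]; exact hseg i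
    · intro x i hxi hprev
      by_cases hi : i = lst
      · subst hi
        rw [hb', Function.update_self]
        refine hc3 x ?_
        intro i'
        rcases hlt_or_eq i' with h | h
        · have := hprev i' h
          rwa [hS'ne i' (by intro he; subst he; exact absurd h (lt_irrefl _))] at this
        · subst h
          simp only [hS', Function.update_self, Finset.mem_compl] at hxi
          exact hxi
      · have hilt : i < lst := (hlt_or_eq i).resolve_right hi
        rw [hb'ne i hi]
        rw [hS'ne i hi] at hxi
        refine hc2 x i hxi ?_
        intro j hj
        have := hprev j hj
        rwa [hS'ne j (by intro he; subst he; exact absurd (lt_trans hj hilt) (lt_irrefl _))] at this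
    · intro x hx
      have hmem : x (σ lst) ∈ S lst := by
        have := hx lst
        simp only [hS', Function.update_self, Finset.mem_compl, not_not] at this
        exact this
      refine hc2 x lst hmem ?_
      intro j hj
      have := hx j
      rwa [hS'ne j (by intro he; subst he; exact absurd hj (lt_irrefl _))] at this
    · -- b' last ≠ new bout
      show b' ⟨n-1, by omega⟩ ≠ b lst
      have : b' ⟨n-1, by omega⟩ = bout := by
        rw [hb']; exact Function.update_self lst bout b
      rw [this]
      exact fun h => hb h.symm
    · left
      have hne : (⟨n-2, by omega⟩ : Fin n) ≠ lst := by
        intro h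
        have := congrArg Fin.val h
        simp [hlst] at this
        omega
      rw [hb'ne _ hne, hcase]
      show bout = b' ⟨n-1, by omega⟩
      rw [hb']
      exact (Function.update_self lst bout b).symm
  · exact main_construct p n hn f σ S b bout hN hb (Or.inr fun h => hcase h.symm)
end

section
/- Let p be a prime, F = F_p, and n ≥ 2, and let f : F^n → F be defined by a canonical datum with partition A_1,…,A_r, segments S_1,…,S_n, and constants B_1,…,B_{r+1}. Then the canalizing variables of f are exactly the variables x_j with j ∈ A_1; more precisely, for j ∈ A_1 the function f is ⟨j:a:b⟩ canalizing exactly for a ∈ S_j and b = B_1, while for j ∉ A_1 there exist no a, b ∈ F such that f is ⟨j:a:b⟩ canalizing. -/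
section Aux
variable {p n : ℕ} [hp : Fact (Nat.Prime p)]

lemma seg_mem {S : Finset (ZMod p)} (h : IsSegment p S) : ∃ x, x ∈ S := by
  haveI : NeZero p := ⟨hp.out.ne_zero⟩
  obtain ⟨j, hj, h | h⟩ := h
  · exact ⟨0, (h 0).mpr (by simp)⟩
  · refine ⟨((p-1 : ℕ) : ZMod p), (h _).mpr ?_⟩
    have hv : ((p-1 : ℕ) : ZMod p).val = p - 1 := ZMod.val_natCast_of_lt (by omega)
    omega

lemma seg_not_mem {S : Finset (ZMod p)} (h : IsSegment p S) : ∃ x, x ∉ S := by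
  haveI : NeZero p := ⟨hp.out.ne_zero⟩
  obtain ⟨j, hj, h | h⟩ := h
  · refine ⟨((p-1 : ℕ) : ZMod p), fun hm => ?_⟩
    have hv : ((p-1 : ℕ) : ZMod p).val = p - 1 := ZMod.val_natCast_of_lt (by omega)
    have := (h _).mp hm
    omega
  · refine ⟨0, fun hm => ?_⟩
    have := (h 0).mp hm
    simp at this

lemma evalAux_eq_B {M B : ℕ → ZMod p} {k i : ℕ} (h : k = 0 ∨ M i = 0) :
    nestEvalAux p M B k i = B i := by
  cases k with
  | zero => rfl
  | succ k =>
    rcases h with h | h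
    · omega
    · simp [nestEvalAux, h]

lemma evalAux_step {M B : ℕ → ZMod p} {k i : ℕ} :
    nestEvalAux p M B (k + 1) i = M i * nestEvalAux p M B k (i + 1) + B i := rfl

variable (d : CanonicalDatum p n)

noncomputable def dIn (j : Fin n) : ZMod p := (seg_mem (d.S_seg j)).choose

lemma dIn_mem (j : Fin n) : dIn d j ∈ d.S j := (seg_mem (d.S_seg j)).choose_spec

noncomputable def dOut (j : Fin n) : ZMod p := (seg_not_mem (d.S_seg j)).choose

lemma dOut_not_mem (j : Fin n) : dOut d j ∉ d.S j := (seg_not_mem (d.S_seg j)).choose_spec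

noncomputable def layerOf (v : Fin n) : Fin d.r := (d.A_cover v).choose

lemma mem_layerOf (v : Fin n) : v ∈ d.A (layerOf d v) := (d.A_cover v).choose_spec

lemma layerOf_eq {v : Fin n} {i : Fin d.r} (h : v ∈ d.A i) : layerOf d v = i := by
  by_contra hne
  exact Finset.disjoint_left.mp (d.A_disjoint _ _ hne) (mem_layerOf d v) h

lemma layer_zero {x : Fin n → ZMod p} {i : ℕ} (hi : i < d.r) {v : Fin n}
    (hv : v ∈ d.A ⟨i, hi⟩) (hx : x v ∈ d.S v) : d.layer i x = 0 := by
  unfold CanonicalDatum.layer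
  rw [dif_pos hi]
  exact Finset.prod_eq_zero hv (by simp [Qind, hx])

lemma layer_one {x : Fin n → ZMod p} {i : ℕ}
    (h : ∀ hi : i < d.r, ∀ v ∈ d.A ⟨i, hi⟩, x v ∉ d.S v) : d.layer i x = 1 := by
  unfold CanonicalDatum.layer
  split
  · exact Finset.prod_eq_one (fun v hv => by simp [Qind, h _ v hv])
  · rfl

lemma Bn_lt {i : ℕ} (hi : i < d.r + 1) : d.Bn i = d.B ⟨i, hi⟩ := dif_pos hi

lemma Bn_ne {i : ℕ} (h0 : 0 < i) (hi : i < d.r + 1) : d.Bn i ≠ 0 := by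
  rw [Bn_lt d hi]; exact d.B_ne _ h0

lemma Bn_zero_eq : d.Bn 0 = d.B 0 := by
  rw [Bn_lt d (by omega)]; rfl

/-- Generic evaluation point: coordinate `j` is `a`, every other coordinate is
outside its segment if its layer is selected by `plan`, inside otherwise. -/
noncomputable def pt (plan : ℕ → Bool) (j : Fin n) (a : ZMod p) : Fin n → ZMod p :=
  fun v => if v = j then a else if plan ((layerOf d v : Fin d.r) : ℕ) then dOut d v else dIn d v

lemma pt_j {plan : ℕ → Bool} {j : Fin n} {a : ZMod p} : pt d plan j a j = a := if_pos rfl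

lemma pt_ne {plan : ℕ → Bool} {j v : Fin n} {a : ZMod p} (h : v ≠ j) :
    pt d plan j a v = if plan ((layerOf d v : Fin d.r) : ℕ) then dOut d v else dIn d v :=
  if_neg h

/-- A layer not containing `j` whose plan value is `false` evaluates to `0`. -/
lemma layer_pt_zero {plan : ℕ → Bool} {j : Fin n} {a : ZMod p} {i : ℕ} (hi : i < d.r)
    (hij : ((layerOf d j : Fin d.r) : ℕ) ≠ i ∨ a ∈ d.S j) (hplan : plan i = false) :
    d.layer i (pt d plan j a) = 0 := by
  by_cases hji : j ∈ d.A ⟨i, hi⟩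
  · have hlj : ((layerOf d j : Fin d.r) : ℕ) = i := by rw [layerOf_eq d hji]
    rcases hij with hij | hij
    · exact absurd hlj hij
    · exact layer_zero d hi hji (by rw [pt_j]; exact hij)
  · obtain ⟨v, hv⟩ := d.A_nonempty ⟨i, hi⟩
    have hvj : v ≠ j := fun h => hji (h ▸ hv)
    refine layer_zero d hi hv ?_
    rw [pt_ne d hvj, layerOf_eq d hv]
    simp only [hplan]
    exact dIn_mem d v

lemma layer_pt_one {plan : ℕ → Bool} {j : Fin n} {a : ZMod p} {i : ℕ}
    (hja : ∀ hi : i < d.r, j ∈ d.A ⟨i, hi⟩ → a ∉ d.S j)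
    (h : ∀ hi : i < d.r, ∀ v ∈ d.A ⟨i, hi⟩, v ≠ j → plan i = true) :
    d.layer i (pt d plan j a) = 1 := by
  refine layer_one d (fun hi v hv => ?_)
  by_cases hvj : v = j
  · subst hvj
    rw [pt_j]
    exact hja hi hv
  · rw [pt_ne d hvj, layerOf_eq d hv]
    simp only [h hi v hv hvj]
    exact dOut_not_mem d v


lemma eval_unfold (x : Fin n → ZMod p) :
    d.eval x = d.layer 0 x * nestEvalAux p (fun i => d.layer i x) d.Bn (d.r - 1) 1
      + d.Bn 0 := by
  have hk : d.r = (d.r - 1) + 1 := by have := d.r_pos; omega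
  unfold CanonicalDatum.eval
  rw [hk, evalAux_step]
  simp

lemma eval_of_layer0 {x : Fin n → ZMod p} (h : d.layer 0 x = 0) : d.eval x = d.Bn 0 := by
  rw [eval_unfold, h, zero_mul, zero_add]

lemma eval_spec1 {x : Fin n → ZMod p} (h0 : d.layer 0 x = 1)
    (h1 : d.r - 1 = 0 ∨ d.layer 1 x = 0) : d.eval x = d.Bn 1 + d.Bn 0 := by
  rw [eval_unfold, h0, one_mul, evalAux_eq_B h1]

lemma eval_spec2 {x : Fin n → ZMod p} (hr : 2 ≤ d.r) (h0 : d.layer 0 x = 1)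
    (h1 : d.layer 1 x = 1) (h2 : d.r - 2 = 0 ∨ d.layer 2 x = 0) :
    d.eval x = d.Bn 2 + d.Bn 1 + d.Bn 0 := by
  have hk : d.r - 1 = (d.r - 2) + 1 := by omega
  rw [eval_unfold, h0, one_mul, hk, evalAux_step, h1, one_mul, evalAux_eq_B h2]

lemma eval_spec3 {x : Fin n → ZMod p} (hr : 3 ≤ d.r) (h0 : d.layer 0 x = 1)
    (h1 : d.layer 1 x = 1) (h2 : d.layer 2 x = 1) (h3 : d.r - 3 = 0 ∨ d.layer 3 x = 0) :
    d.eval x = d.Bn 3 + d.Bn 2 + d.Bn 1 + d.Bn 0 := by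
  have hk : d.r - 1 = (d.r - 2) + 1 := by omega
  have hk2 : d.r - 2 = (d.r - 3) + 1 := by omega
  rw [eval_unfold, h0, one_mul, hk, evalAux_step, h1, one_mul, hk2, evalAux_step, h2,
    one_mul, evalAux_eq_B h3]

end Aux

section Main
variable {p n : ℕ} [hp : Fact (Nat.Prime p)] (d : CanonicalDatum p n)

lemma layerOf_val_eq {v : Fin n} {i : ℕ} {hi : i < d.r} (h : v ∈ d.A ⟨i, hi⟩) :
    ((layerOf d v : Fin d.r) : ℕ) = i := by rw [layerOf_eq d h]

/-- Master lemma: if `j ∈ A₁ → a ∉ S_j`, then `eval` takes two different values on the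
slice `{x | x j = a}`. -/
lemma twoVals (hn : 2 ≤ n) (j : Fin n) (a : ZMod p)
    (h0 : j ∈ d.A ⟨0, d.r_pos⟩ → a ∉ d.S j) :
    ∃ x y : Fin n → ZMod p, x j = a ∧ y j = a ∧ d.eval x ≠ d.eval y := by
  have hjm : j ∈ d.A (layerOf d j) := mem_layerOf d j
  have hB1 : d.Bn 1 ≠ 0 := Bn_ne d one_pos (by have := d.r_pos; omega)
  by_cases hm0 : ((layerOf d j : Fin d.r) : ℕ) = 0
  · -- j is in the first layer, so a ∉ S j
    have hjA0 : j ∈ d.A ⟨0, d.r_pos⟩ := by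
      have : layerOf d j = ⟨0, d.r_pos⟩ := Fin.ext hm0
      rwa [this] at hjm
    have ha : a ∉ d.S j := h0 hjA0
    by_cases hA0 : ∃ v ∈ d.A ⟨0, d.r_pos⟩, v ≠ j
    · -- first layer has another variable
      obtain ⟨v, hv, hvj⟩ := hA0
      refine ⟨pt d (fun _ => false) j a, pt d (fun i => i == 0) j a, pt_j d, pt_j d, ?_⟩
      have hx : d.eval (pt d (fun _ => false) j a) = d.Bn 0 := by
        refine eval_of_layer0 d (layer_zero d d.r_pos hv ?_)
        rw [pt_ne d hvj]
        simpa using dIn_mem d v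
      have hy : d.eval (pt d (fun i => i == 0) j a) = d.Bn 1 + d.Bn 0 := by
        refine eval_spec1 d (layer_pt_one d (fun _ _ => ha) (fun _ _ _ _ => rfl)) ?_
        by_cases hr : 1 < d.r
        · exact Or.inr (layer_pt_zero d hr (Or.inl (by omega)) rfl)
        · exact Or.inl (by omega)
      rw [hx, hy]
      intro heq
      exact hB1 (by linear_combination -heq)
    · -- A₁ = {j}; then r ≥ 2
      have hr2 : 2 ≤ d.r := by
        haveI : Nontrivial (Fin n) := Fin.nontrivial_iff_two_le.mpr hn
        obtain ⟨v, hvj⟩ := exists_ne j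
        have hvm : v ∈ d.A (layerOf d v) := mem_layerOf d v
        have : ((layerOf d v : Fin d.r) : ℕ) ≠ 0 := by
          intro h
          have : layerOf d v = ⟨0, d.r_pos⟩ := Fin.ext h
          exact hA0 ⟨v, this ▸ hvm, hvj⟩
        have := (layerOf d v).isLt
        omega
      have hone : ∀ plan : ℕ → Bool, d.layer 0 (pt d plan j a) = 1 := fun plan =>
        layer_pt_one d (fun _ _ => ha) (fun hi v hv hvj => absurd ⟨v, hv, hvj⟩ hA0)
      refine ⟨pt d (fun _ => false) j a, pt d (fun i => i == 1) j a, pt_j d, pt_j d, ?_⟩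
      have hx : d.eval (pt d (fun _ => false) j a) = d.Bn 1 + d.Bn 0 :=
        eval_spec1 d (hone _)
          (Or.inr (layer_pt_zero d (by omega) (Or.inl (by omega)) rfl))
      have hy : d.eval (pt d (fun i => i == 1) j a) = d.Bn 2 + d.Bn 1 + d.Bn 0 := by
        refine eval_spec2 d hr2 (hone _)
          (layer_pt_one d (fun hi hj => absurd (layerOf_val_eq d hj) (by omega))
            (fun _ _ _ _ => rfl)) ?_
        by_cases hr : 2 < d.r
        · exact Or.inr (layer_pt_zero d hr (Or.inl (by omega)) rfl)
        · exact Or.inl (by omega)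
      rw [hx, hy]
      intro heq
      exact Bn_ne d two_pos (by omega) (by linear_combination -heq)
  · -- j is in a deeper layer
    have hr2 : 2 ≤ d.r := by have := (layerOf d j).isLt; omega
    have hx : d.eval (pt d (fun _ => false) j a) = d.Bn 0 :=
      eval_of_layer0 d (layer_pt_zero d d.r_pos (Or.inl hm0) rfl)
    by_cases hhard : ((layerOf d j : Fin d.r) : ℕ) = 1 ∧ a ∉ d.S j ∧
        ¬∃ v ∈ d.A ⟨1, by omega⟩, v ≠ j
    · -- hard case: A₂ = {j}, a ∉ S j
      obtain ⟨hm1, ha, hA1⟩ := hhard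
      have hone : ∀ plan : ℕ → Bool, plan 0 = true →
          d.layer 0 (pt d plan j a) = 1 := fun plan hplan =>
        layer_pt_one d (fun hi hj => absurd (layerOf_val_eq d hj) (by omega))
          (fun _ _ _ _ => hplan)
      have hone1 : ∀ plan : ℕ → Bool, d.layer 1 (pt d plan j a) = 1 := fun plan =>
        layer_pt_one d (fun _ _ => ha) (fun hi v hv hvj => absurd ⟨v, hv, hvj⟩ hA1)
      by_cases hz : d.Bn 2 + d.Bn 1 = 0
      · -- then r ≥ 3 by the last condition
        have hm : layerOf d j = ⟨1, by omega⟩ := Fin.ext hm1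
        have hcard : (d.A ⟨1, by omega⟩).card = 1 := by
          rw [Finset.card_eq_one]
          refine ⟨j, Finset.eq_singleton_iff_unique_mem.mpr ⟨hm ▸ hjm, fun v hv => ?_⟩⟩
          by_contra hvj
          exact hA1 ⟨v, hv, hvj⟩
        have hr3 : 3 ≤ d.r := by
          by_contra hr3
          have hre : d.r = 2 := by omega
          have hAeq : d.A ⟨d.r - 1, Nat.sub_lt d.r_pos one_pos⟩ = d.A ⟨1, by omega⟩ :=
            congrArg d.A (Fin.mk_eq_mk.mpr (by omega))
          have h2 := d.last_cond (by rw [hAeq]; exact hcard)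
          have hsum : d.Bn (d.r - 1) + d.Bn d.r ≠ 0 := by
            rw [Bn_lt d (by omega), Bn_lt d (by omega)]
            exact h2
          rw [show d.r - 1 = 1 from by omega, hre] at hsum
          exact hsum (by linear_combination hz)
        refine ⟨pt d (fun _ => false) j a, pt d (fun i => i == 0 || i == 2) j a,
          pt_j d, pt_j d, ?_⟩
        have hy : d.eval (pt d (fun i => i == 0 || i == 2) j a)
            = d.Bn 3 + d.Bn 2 + d.Bn 1 + d.Bn 0 := by
          refine eval_spec3 d hr3 (hone _ rfl) (hone1 _)
            (layer_pt_one d (fun hi hj => absurd (layerOf_val_eq d hj) (by omega))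
              (fun _ _ _ _ => rfl)) ?_
          by_cases hr : 3 < d.r
          · exact Or.inr (layer_pt_zero d hr (Or.inl (by omega)) rfl)
          · exact Or.inl (by omega)
        rw [hx, hy]
        intro heq
        exact Bn_ne d three_pos (by omega) (by linear_combination -heq - hz)
      · refine ⟨pt d (fun _ => false) j a, pt d (fun i => i == 0) j a, pt_j d, pt_j d, ?_⟩
        have hy : d.eval (pt d (fun i => i == 0) j a) = d.Bn 2 + d.Bn 1 + d.Bn 0 := by
          refine eval_spec2 d hr2 (hone _ rfl) (hone1 _) ?_
          by_cases hr : 2 < d.r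
          · exact Or.inr (layer_pt_zero d hr (Or.inl (by omega)) rfl)
          · exact Or.inl (by omega)
        rw [hx, hy]
        intro heq
        exact hz (by linear_combination -heq)
    · -- easy case: layer 1 can be made zero
      refine ⟨pt d (fun _ => false) j a, pt d (fun i => i == 0) j a, pt_j d, pt_j d, ?_⟩
      have hy : d.eval (pt d (fun i => i == 0) j a) = d.Bn 1 + d.Bn 0 := by
        refine eval_spec1 d
          (layer_pt_one d (fun hi hj => absurd (layerOf_val_eq d hj) (by omega))
            (fun _ _ _ _ => rfl)) (Or.inr ?_)
        push_neg at hhard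
        by_cases hm1 : ((layerOf d j : Fin d.r) : ℕ) = 1
        · by_cases ha : a ∈ d.S j
          · exact layer_pt_zero d (by omega) (Or.inr ha) rfl
          · obtain ⟨v, hv, hvj⟩ := hhard hm1 ha
            refine layer_zero d (by omega) hv ?_
            rw [pt_ne d hvj, layerOf_eq d hv]
            simpa using dIn_mem d v
        · exact layer_pt_zero d (by omega) (Or.inl hm1) rfl
      rw [hx, hy]
      intro heq
      exact hB1 (by linear_combination -heq)

end Main

section Final
variable {p n : ℕ} [hp : Fact (Nat.Prime p)] (d : CanonicalDatum p n)

lemma eval_B0_of_mem {j : Fin n} (hj : j ∈ d.A ⟨0, d.r_pos⟩) {x : Fin n → ZMod p}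
    (hx : x j ∈ d.S j) : d.eval x = d.Bn 0 :=
  eval_of_layer0 d (layer_zero d d.r_pos hj hx)

lemma exists_ne_B0 {j : Fin n} (hj : j ∈ d.A ⟨0, d.r_pos⟩) :
    ∃ x : Fin n → ZMod p, x j ∉ d.S j ∧ d.eval x ≠ d.Bn 0 := by
  refine ⟨pt d (fun i => i == 0) j (dOut d j), ?_, ?_⟩
  · rw [pt_j]; exact dOut_not_mem d j
  · have h0 : d.layer 0 (pt d (fun i => i == 0) j (dOut d j)) = 1 :=
      layer_pt_one d (fun _ _ => dOut_not_mem d j) (fun _ _ _ _ => rfl)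
    have h1 : d.r - 1 = 0 ∨ d.layer 1 (pt d (fun i => i == 0) j (dOut d j)) = 0 := by
      by_cases hr : 1 < d.r
      · exact Or.inr (layer_pt_zero d hr (Or.inl (by rw [layerOf_val_eq d hj]; omega)) rfl)
      · exact Or.inl (by omega)
    rw [eval_spec1 d h0 h1]
    intro heq
    exact Bn_ne d one_pos (by have := d.r_pos; omega) (by linear_combination heq)

end Final


/-- the canalizing variables of a function defined by a canonical datum are
exactly the variables in the first layer `A₁`; for `j ∈ A₁`, `f` is `⟨j:a:b⟩` canalizing
exactly when `a ∈ S_j` and `b = B₁`, and for `j ∉ A₁` no `a, b` work. -/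
theorem stmt4 (p n : ℕ) [Fact (Nat.Prime p)] (hn : 2 ≤ n) (d : CanonicalDatum p n) :
    (∀ j ∈ d.A ⟨0, d.r_pos⟩, ∀ a b : ZMod p,
        IsCanalizing p n d.eval j a b ↔ (a ∈ d.S j ∧ b = d.B 0)) ∧
    (∀ j : Fin n, j ∉ d.A ⟨0, d.r_pos⟩ → ∀ a b : ZMod p,
        ¬ IsCanalizing p n d.eval j a b) := by
  constructor
  · intro j hj a b
    constructor
    · rintro ⟨hc1, hc2⟩
      have haS : a ∈ d.S j := by
        by_contra ha
        obtain ⟨x, y, hxj, hyj, hne⟩ := twoVals d hn j a (fun _ => ha)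
        exact hne ((hc1 x hxj).trans (hc1 y hyj).symm)
      refine ⟨haS, ?_⟩
      have hx : (fun v => if v = j then a else 0) j = a := if_pos rfl
      have hb := hc1 (fun v => if v = j then a else 0) hx
      rw [eval_B0_of_mem d hj (by simpa using haS)] at hb
      rw [← hb, Bn_zero_eq]
    · rintro ⟨haS, rfl⟩
      constructor
      · intro x hx
        rw [eval_B0_of_mem d hj (by rw [hx]; exact haS), Bn_zero_eq]
      · intro hall
        obtain ⟨x, hxn, hxe⟩ := exists_ne_B0 d hj
        have hxa : x j ≠ a := fun h => hxn (h ▸ haS)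
        exact hxe ((hall x hxa).trans (Bn_zero_eq d).symm)
  · rintro j hjA a b ⟨hc1, hc2⟩
    obtain ⟨x, y, hxj, hyj, hne⟩ := twoVals d hn j a (fun hj => absurd hj hjA)
    exact hne ((hc1 x hxj).trans (hc1 y hyj).symm)
end

section
/- Let p be a prime, F = F_p, and k ≥ 2. For any a, b ∈ F∖{0} and segments S_1,…,S_k of F, the function f : F^k → F defined by f(x_1,…,x_k) = b·∏_{j=1}^k Q_{S_j}(x_j) + a is not equal to the function (x_1,…,x_k) ↦ c·∏_{j=1}^k Q_{S'_j}(x_j) for any c ∈ F∖{0} and any segments S'_1,…,S'_k of F. -/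
lemma segment_nonempty (p : ℕ) [Fact (Nat.Prime p)] (S : Finset (ZMod p))
    (h : IsSegment p S) : S.Nonempty := by
  have hp := (Fact.out : p.Prime)
  have hp2 : 2 ≤ p := hp.two_le
  haveI : NeZero p := ⟨hp.ne_zero⟩
  obtain ⟨j, hj, h | h⟩ := h
  · exact ⟨0, (h 0).2 (by simp [ZMod.val_zero])⟩
  · refine ⟨((j + 1 : ℕ) : ZMod p), (h _).2 ?_⟩
    rw [ZMod.val_natCast_of_lt (by omega)]
    omega

/-- Lemma 3.2 (1): for `k ≥ 2`, `a, b ≠ 0` and segments `S₁,…,S_k`, the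
function `b·∏ⱼ Q_{Sⱼ}(xⱼ) + a` cannot be written as `c·∏ⱼ Q_{S'ⱼ}(xⱼ)` with `c ≠ 0`
and segments `S'₁,…,S'_k`. -/
theorem stmt6 (p k : ℕ) [Fact (Nat.Prime p)] (hk : 2 ≤ k)
    (a b : ZMod p) (ha : a ≠ 0) (hb : b ≠ 0)
    (S : Fin k → Finset (ZMod p)) (hS : ∀ j, IsSegment p (S j))
    (c : ZMod p) (hc : c ≠ 0)
    (S' : Fin k → Finset (ZMod p)) (hS' : ∀ j, IsSegment p (S' j)) :
    (fun x : Fin k → ZMod p => b * ∏ j, Qind p (S j) (x j) + a) ≠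
      fun x : Fin k → ZMod p => c * ∏ j, Qind p (S' j) (x j) := by
  have hp := (Fact.out : p.Prime)
  obtain ⟨s0, hs0⟩ := segment_nonempty p (S ⟨0, by omega⟩) (hS _)
  obtain ⟨s1, hs1⟩ := segment_nonempty p (S' ⟨1, by omega⟩) (hS' _)
  intro h
  set x : Fin k → ZMod p := fun j => if j = ⟨0, by omega⟩ then s0 else s1 with hx
  have h0 : (∏ j, Qind p (S j) (x j)) = 0 := by
    apply Finset.prod_eq_zero (Finset.mem_univ (⟨0, by omega⟩ : Fin k))
    simp [hx, Qind, hs0]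
  have h1 : (∏ j, Qind p (S' j) (x j)) = 0 := by
    apply Finset.prod_eq_zero (Finset.mem_univ (⟨1, by omega⟩ : Fin k))
    have : (⟨1, by omega⟩ : Fin k) ≠ ⟨0, by omega⟩ := by
      simp [Fin.ext_iff]
    simp [hx, Qind, hs1, this]
  have := congrFun h x
  simp only [h0, h1, mul_zero, zero_add] at this
  exact ha this
end

section
/- Let p be a prime and F = F_p. The number of triples (x, y, S), where x, y ∈ F with x ≠ y and S is a segment of F such that exactly one of x, y lies in S, equals 2p(p²−1)/3. Equivalently, since there are p(p−1) ordered pairs (x,y) with x ≠ y and 2(p−1) segments, if (x,y,S) is chosen uniformly at random among all such triples with x ≠ y, the probability that exactly one of x, y lies in S is (p+1)/(3(p−1)). -/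
def stmt14SegL (p : ℕ) [NeZero p] (j : ℕ) : Finset (ZMod p) :=
  Finset.univ.filter (fun x => x.val ≤ j)

section Stmt14Aux
open Finset
variable (p : ℕ) [Fact p.Prime]

lemma stmt14_segL_eq_image (j : ℕ) (hj : j + 1 ≤ p) :
    stmt14SegL p j = (Finset.range (j+1)).image (Nat.cast : ℕ → ZMod p) := by
  ext x
  simp only [stmt14SegL, mem_filter, mem_univ, true_and, mem_image, mem_range, Nat.lt_succ_iff]
  constructor
  · intro h
    exact ⟨x.val, h, ZMod.natCast_rightInverse x⟩
  · rintro ⟨i, hi, rfl⟩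
    rw [ZMod.val_cast_of_lt (lt_of_le_of_lt hi hj)]
    exact hi

lemma stmt14_card_segL (j : ℕ) (hj : j + 1 ≤ p) : (stmt14SegL p j).card = j + 1 := by
  rw [stmt14_segL_eq_image p j hj, Finset.card_image_of_injOn, Finset.card_range]
  intro a ha b hb hab
  simp only [mem_coe, mem_range, Nat.lt_succ_iff] at ha hb
  have h1 := ZMod.val_cast_of_lt (n := p) (lt_of_le_of_lt ha hj)
  have h2 := ZMod.val_cast_of_lt (n := p) (lt_of_le_of_lt hb hj)
  rw [← h1, ← h2, hab]

lemma stmt14_segment_iff (S : Finset (ZMod p)) :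
    IsSegment p S ↔ ∃ j, j < p - 1 ∧ (S = stmt14SegL p j ∨ S = (stmt14SegL p j)ᶜ) := by
  unfold IsSegment
  refine exists_congr fun j => and_congr_right fun hj => ?_
  constructor
  · rintro (h | h) <;> [left; right] <;> (ext x; simp [stmt14SegL, h x])
  · rintro (rfl | rfl) <;> [left; right] <;> (intro x; simp [stmt14SegL])

lemma stmt14_sum_aux (m : ℕ) :
    6 * ∑ j ∈ range m, (j+1) * (m - j) = m * (m+1) * (m+2) := by
  induction m with
  | zero => simp
  | succ m ih =>
    have h1 : ∑ j ∈ range (m+1), (j+1) * (m+1-j)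
        = (∑ j ∈ range m, (j+1) * (m-j)) + ∑ j ∈ range (m+1), (j+1) := by
      rw [Finset.sum_range_succ, Finset.sum_range_succ]
      have hm : m + 1 - m = 1 := by omega
      rw [hm, Nat.mul_one]
      have hb : ∀ j ∈ range m, (j+1)*(m+1-j) = (j+1)*(m-j) + (j+1) := by
        intro j hj
        rw [mem_range] at hj
        have : m + 1 - j = (m - j) + 1 := by omega
        rw [this, Nat.mul_add, Nat.mul_one]
      rw [Finset.sum_congr rfl hb, Finset.sum_add_distrib]
      omega
    have h2 : 2 * ∑ j ∈ range (m+1), (j+1) = (m+1) * (m+2) := by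
      have he : ∑ j ∈ range (m+1), (j+1) = ∑ i ∈ range (m+2), i := by
        rw [Finset.sum_range_succ' (fun i => i) (m+1)]
        simp
      rw [he, mul_comm, Finset.sum_range_id_mul_two]
      simp [Nat.add_sub_cancel, Nat.mul_comm]
    rw [h1, Nat.mul_add, ih]
    nlinarith [h2]

lemma stmt14_pairs_card (S : Finset (ZMod p)) :
    ((univ : Finset (ZMod p × ZMod p)).filter
      (fun xy => (xy.1 ∈ S ∧ xy.2 ∉ S) ∨ (xy.1 ∉ S ∧ xy.2 ∈ S))).card
      = 2 * (S.card * Sᶜ.card) := by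
  classical
  have h : (univ.filter fun xy : ZMod p × ZMod p =>
        (xy.1 ∈ S ∧ xy.2 ∉ S) ∨ (xy.1 ∉ S ∧ xy.2 ∈ S))
      = (S ×ˢ Sᶜ) ∪ (Sᶜ ×ˢ S) := by
    ext ⟨x, y⟩
    simp [Finset.mem_product]
  rw [h, Finset.card_union_of_disjoint, Finset.card_product, Finset.card_product]
  · ring
  · rw [Finset.disjoint_left]
    rintro ⟨x, y⟩ hx hy
    simp [Finset.mem_product] at hx hy
    tauto

open Classical in
lemma stmt14_main_count :
    3 * ((univ : Finset (ZMod p × ZMod p × Finset (ZMod p))).filter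
      (fun t => t.1 ≠ t.2.1 ∧ IsSegment p t.2.2 ∧
        ((t.1 ∈ t.2.2 ∧ t.2.1 ∉ t.2.2) ∨ (t.1 ∉ t.2.2 ∧ t.2.1 ∈ t.2.2)))).card
    = 2 * p * (p ^ 2 - 1) := by
  classical
  have hp2 : 2 ≤ p := (Fact.out : p.Prime).two_le
  have hdrop : ((univ : Finset (ZMod p × ZMod p × Finset (ZMod p))).filter
      (fun t => t.1 ≠ t.2.1 ∧ IsSegment p t.2.2 ∧
        ((t.1 ∈ t.2.2 ∧ t.2.1 ∉ t.2.2) ∨ (t.1 ∉ t.2.2 ∧ t.2.1 ∈ t.2.2))))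
      = ((univ : Finset (ZMod p × ZMod p × Finset (ZMod p))).filter
      (fun t => IsSegment p t.2.2 ∧
        ((t.1 ∈ t.2.2 ∧ t.2.1 ∉ t.2.2) ∨ (t.1 ∉ t.2.2 ∧ t.2.1 ∈ t.2.2)))) := by
    apply Finset.filter_congr
    intro t _
    constructor
    · tauto
    · rintro ⟨h1, h2⟩
      refine ⟨?_, h1, h2⟩
      intro heq
      rw [heq] at h2
      tauto
  rw [hdrop]
  set Segs : Finset (Finset (ZMod p)) := univ.filter (IsSegment p) with hSegs
  have hfib : ((univ : Finset (ZMod p × ZMod p × Finset (ZMod p))).filter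
      (fun t => IsSegment p t.2.2 ∧
        ((t.1 ∈ t.2.2 ∧ t.2.1 ∉ t.2.2) ∨ (t.1 ∉ t.2.2 ∧ t.2.1 ∈ t.2.2)))).card
      = ∑ S ∈ Segs, 2 * (S.card * Sᶜ.card) := by
    rw [Finset.card_eq_sum_card_fiberwise (f := fun t => t.2.2) (t := Segs)
      (fun t ht => by simp only [mem_coe, mem_filter, mem_univ, true_and] at ht; simp [hSegs, ht.1])]
    refine Finset.sum_congr rfl fun S hS => ?_
    rw [← stmt14_pairs_card p S]
    refine Finset.card_bij' (fun t _ => (t.1, t.2.1)) (fun xy _ => (xy.1, xy.2, S))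
      ?_ ?_ ?_ ?_
    · rintro ⟨x, y, T⟩ ht
      simp only [mem_filter, mem_univ, true_and] at ht ⊢
      obtain ⟨⟨hseg, hone⟩, rfl⟩ := ht
      exact hone
    · rintro ⟨x, y⟩ hxy
      simp only [mem_filter, mem_univ, true_and] at hxy ⊢
      simp only [hSegs, mem_filter, mem_univ, true_and] at hS
      exact ⟨⟨hS, hxy⟩, trivial⟩
    · rintro ⟨x, y, T⟩ ht
      simp only [mem_filter, mem_univ, true_and] at ht
      obtain ⟨-, rfl⟩ := ht
      rfl
    · rintro ⟨x, y⟩ _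
      rfl
  rw [hfib]
  -- describe Segs as a disjoint union of two images
  have hcard : ∀ j < p - 1, (stmt14SegL p j).card = j + 1 := fun j hj =>
    stmt14_card_segL p j (by omega)
  have hcardc : ∀ j < p - 1, ((stmt14SegL p j)ᶜ).card = p - (j + 1) := by
    intro j hj
    rw [Finset.card_compl, ZMod.card, hcard j hj]
  have hzero : ∀ j, (0 : ZMod p) ∈ stmt14SegL p j := by
    intro j
    simp [stmt14SegL, ZMod.val_zero]
  have hSegsEq : Segs = ((range (p-1)).image (stmt14SegL p)) ∪
      ((range (p-1)).image (fun j => (stmt14SegL p j)ᶜ)) := by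
    ext S
    simp only [hSegs, mem_filter, mem_univ, true_and, mem_union, mem_image, mem_range,
      stmt14_segment_iff]
    constructor
    · rintro ⟨j, hj, (rfl | rfl)⟩
      · exact Or.inl ⟨j, hj, rfl⟩
      · exact Or.inr ⟨j, hj, rfl⟩
    · rintro (⟨j, hj, rfl⟩ | ⟨j, hj, rfl⟩)
      · exact ⟨j, hj, Or.inl rfl⟩
      · exact ⟨j, hj, Or.inr rfl⟩
  have hinjL : Set.InjOn (stmt14SegL p) (range (p-1)) := by
    intro a ha b hb hab
    simp only [mem_coe, mem_range] at ha hb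
    have := hcard a ha
    rw [hab, hcard b hb] at this
    omega
  have hinjU : Set.InjOn (fun j => (stmt14SegL p j)ᶜ) (range (p-1)) := by
    intro a ha b hb hab
    exact hinjL ha hb (compl_injective hab)
  have hdisj : Disjoint ((range (p-1)).image (stmt14SegL p))
      ((range (p-1)).image (fun j => (stmt14SegL p j)ᶜ)) := by
    rw [Finset.disjoint_left]
    rintro S hS hS'
    simp only [mem_image, mem_range] at hS hS'
    obtain ⟨j, hj, rfl⟩ := hS
    obtain ⟨j', hj', he⟩ := hS'
    have h0 := hzero j
    rw [← he] at h0
    simp only [Finset.mem_compl] at h0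
    exact h0 (hzero j')
  rw [hSegsEq, Finset.sum_union hdisj, Finset.sum_image hinjL, Finset.sum_image hinjU]
  have hterm : ∀ j ∈ range (p-1),
      2 * ((stmt14SegL p j).card * (stmt14SegL p j)ᶜ.card)
        + 2 * (((stmt14SegL p j)ᶜ).card * ((stmt14SegL p j)ᶜ)ᶜ.card)
      = 4 * ((j+1) * ((p-1) - j)) := by
    intro j hj
    rw [mem_range] at hj
    rw [compl_compl, hcard j hj, hcardc j hj]
    have : p - (j+1) = (p-1) - j := by omega
    rw [this]
    ring
  rw [← Finset.sum_add_distrib, Finset.sum_congr rfl hterm, ← Finset.mul_sum]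
  have h6 := stmt14_sum_aux (p - 1)
  have hm1 : p - 1 + 1 = p := by omega
  have hm2 : p - 1 + 2 = p + 1 := by omega
  rw [hm1, hm2] at h6
  have h1 : 1 ≤ p := by omega
  have hpow : 1 ≤ p ^ 2 := Nat.one_le_pow 2 p (by omega)
  set T := ∑ j ∈ range (p-1), (j+1) * ((p-1) - j) with hT
  have : 3 * (4 * T) = 2 * (6 * T) := by ring
  rw [this, h6]
  zify [h1, hpow]
  ring
end Stmt14Aux
open Finset


/-- the number of triples `(x, y, S)` with `x ≠ y` and `S` a segment such
that exactly one of `x, y` lies in `S` equals `2p(p²−1)/3`; equivalently, the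
corresponding probability is `(p+1)/(3(p−1))`. -/
theorem stmt14 (p : ℕ) [Fact (Nat.Prime p)] :
    3 * Set.ncard {t : ZMod p × ZMod p × Finset (ZMod p) |
        t.1 ≠ t.2.1 ∧ IsSegment p t.2.2 ∧
        ((t.1 ∈ t.2.2 ∧ t.2.1 ∉ t.2.2) ∨ (t.1 ∉ t.2.2 ∧ t.2.1 ∈ t.2.2))} =
      2 * p * (p ^ 2 - 1) ∧
    (Set.ncard {t : ZMod p × ZMod p × Finset (ZMod p) |
        t.1 ≠ t.2.1 ∧ IsSegment p t.2.2 ∧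
        ((t.1 ∈ t.2.2 ∧ t.2.1 ∉ t.2.2) ∨ (t.1 ∉ t.2.2 ∧ t.2.1 ∈ t.2.2))} : ℚ) /
        ((p : ℚ) * ((p : ℚ) - 1) * (2 * ((p : ℚ) - 1))) =
      ((p : ℚ) + 1) / (3 * ((p : ℚ) - 1)) := by
  classical
  have hp2 : 2 ≤ p := (Fact.out : p.Prime).two_le
  have hset : {t : ZMod p × ZMod p × Finset (ZMod p) |
        t.1 ≠ t.2.1 ∧ IsSegment p t.2.2 ∧
        ((t.1 ∈ t.2.2 ∧ t.2.1 ∉ t.2.2) ∨ (t.1 ∉ t.2.2 ∧ t.2.1 ∈ t.2.2))}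
      = ↑((univ : Finset (ZMod p × ZMod p × Finset (ZMod p))).filter
        (fun t => t.1 ≠ t.2.1 ∧ IsSegment p t.2.2 ∧
          ((t.1 ∈ t.2.2 ∧ t.2.1 ∉ t.2.2) ∨ (t.1 ∉ t.2.2 ∧ t.2.1 ∈ t.2.2)))) := by
    ext t
    simp
  rw [hset, Set.ncard_coe_finset]
  have hN := stmt14_main_count p
  refine ⟨hN, ?_⟩
  have hpow : 1 ≤ p ^ 2 := Nat.one_le_pow 2 p (by omega)
  have hQ : 3 * (((univ : Finset (ZMod p × ZMod p × Finset (ZMod p))).filter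
      (fun t => t.1 ≠ t.2.1 ∧ IsSegment p t.2.2 ∧
        ((t.1 ∈ t.2.2 ∧ t.2.1 ∉ t.2.2) ∨ (t.1 ∉ t.2.2 ∧ t.2.1 ∈ t.2.2)))).card : ℚ)
      = 2 * p * ((p:ℚ) ^ 2 - 1) := by
    exact_mod_cast congrArg (Nat.cast : ℕ → ℚ) hN
  have hpQ : (2:ℚ) ≤ (p:ℚ) := by exact_mod_cast hp2
  have hp0 : (p:ℚ) ≠ 0 := by linarith
  have hp1 : (p:ℚ) - 1 ≠ 0 := by intro h; linarith [sub_eq_zero.mp h]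
  field_simp
  nlinarith [hQ]
end

section
/- Let p be a prime, F = F_p, and n ≥ 2. The number of distinct functions f : F^n → F of the form f(x_1,…,x_n) = B_2·∏_{j=1}^{n} Q_{S_j}(x_j) + B_1, where B_1 ∈ F, B_2 ∈ F∖{0}, and S_1,…,S_n are segments of F (i.e., the number of nested canalizing functions in n variables whose layer number r equals 1), is 2^n (p−1)^{n+1} p. -/
section Stmt16Aux

variable {p n : ℕ} [Fact (Nat.Prime p)]

private lemma seg_exists_mem {S : Finset (ZMod p)} (hS : IsSegment p S) :
    (∃ a, a ∈ S) ∧ (∃ c, c ∉ S) := by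
  have hp : 2 ≤ p := (Fact.out : p.Prime).two_le
  obtain ⟨j, hj, h | h⟩ := hS
  · refine ⟨⟨0, ?_⟩, ⟨((p - 1 : ℕ) : ZMod p), ?_⟩⟩
    · rw [h]; simp
    · rw [h, ZMod.val_cast_of_lt (by omega)]; omega
  · refine ⟨⟨((p - 1 : ℕ) : ZMod p), ?_⟩, ⟨0, ?_⟩⟩
    · rw [h, ZMod.val_cast_of_lt (by omega)]; omega
    · rw [h]; simp

private lemma prodQ_eq_zero {S : Fin n → Finset (ZMod p)} {x : Fin n → ZMod p}
    (h : ∃ j, x j ∈ S j) : (∏ j, Qind p (S j) (x j)) = 0 := by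
  obtain ⟨j, hj⟩ := h
  exact Finset.prod_eq_zero (Finset.mem_univ j) (by simp [Qind, hj])

private lemma prodQ_eq_one {S : Fin n → Finset (ZMod p)} {x : Fin n → ZMod p}
    (h : ∀ j, x j ∉ S j) : (∏ j, Qind p (S j) (x j)) = 1 :=
  Finset.prod_eq_one (fun j _ => by simp [Qind, h j])

/-- injectivity of the parametrization -/
private lemma stmt16_inj (hn : 2 ≤ n) {B₁ B₂ B₁' B₂' : ZMod p}
    {S S' : Fin n → Finset (ZMod p)} (hB₂ : B₂ ≠ 0) (hB₂' : B₂' ≠ 0)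
    (hS : ∀ j, IsSegment p (S j)) (hS' : ∀ j, IsSegment p (S' j))
    (hf : (fun x : Fin n → ZMod p => B₂ * ∏ j, Qind p (S j) (x j) + B₁)
        = (fun x : Fin n → ZMod p => B₂' * ∏ j, Qind p (S' j) (x j) + B₁')) :
    B₁ = B₁' ∧ B₂ = B₂' ∧ S = S' := by
  choose a ha using fun j => (seg_exists_mem (hS j)).1
  choose c hc using fun j => (seg_exists_mem (hS j)).2
  choose a' ha' using fun j => (seg_exists_mem (hS' j)).1
  choose c' hc' using fun j => (seg_exists_mem (hS' j)).2
  have hfx : ∀ x : Fin n → ZMod p,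
      B₂ * ∏ j, Qind p (S j) (x j) + B₁ = B₂' * ∏ j, Qind p (S' j) (x j) + B₁' :=
    fun x => congrFun hf x
  -- B₁ = B₁' using n ≥ 2
  have i0 : Fin n := ⟨0, by omega⟩
  have i1 : Fin n := ⟨1, by omega⟩
  have hB1 : B₁ = B₁' := by
    set x : Fin n → ZMod p := fun k => if k = (⟨0, by omega⟩ : Fin n) then a' ⟨0, by omega⟩
      else a ⟨1, by omega⟩ with hxdef
    have h1 : (∏ j, Qind p (S j) (x j)) = 0 :=
      prodQ_eq_zero ⟨⟨1, by omega⟩, by simp [hxdef, (by simp [Fin.ext_iff] :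
        (⟨1, by omega⟩ : Fin n) ≠ ⟨0, by omega⟩), ha]⟩
    have h2 : (∏ j, Qind p (S' j) (x j)) = 0 :=
      prodQ_eq_zero ⟨⟨0, by omega⟩, by simp [hxdef, ha']⟩
    have := hfx x
    rw [h1, h2] at this
    simpa using this
  -- B₂ = B₂'
  have hB2 : B₂ = B₂' := by
    have h1 : (∏ j, Qind p (S' j) (c' j)) = 1 := prodQ_eq_one hc'
    have := hfx c'
    rw [h1, hB1] at this
    rcases eq_or_ne (∏ j, Qind p (S j) (c' j)) 1 with h | h
    · rw [h] at this
      simpa using this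
    · exfalso
      have hex : ∃ j, c' j ∈ S j := by
        by_contra hcon
        push_neg at hcon
        exact h (prodQ_eq_one hcon)
      rw [prodQ_eq_zero hex] at this
      simp at this
      exact hB₂' this
  -- S = S'
  have hSS : ∀ j t, t ∈ S j ↔ t ∈ S' j := by
    have main : ∀ (D₁ D₂ : ZMod p) (T T' : Fin n → Finset (ZMod p)),
        D₂ ≠ 0 →
        (∀ x : Fin n → ZMod p,
          D₂ * ∏ j, Qind p (T j) (x j) + D₁ = D₂ * ∏ j, Qind p (T' j) (x j) + D₁) →
        (∀ j : Fin n, ∃ cc : Fin n → ZMod p, ∀ k, cc k ∉ T' k) →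
        ∀ j t, t ∈ T j → t ∈ T' j := by
      intro D₁ D₂ T T' hD2 hx hcc j t ht
      by_contra hnot
      obtain ⟨cc, hccp⟩ := hcc j
      set x : Fin n → ZMod p := fun k => if k = j then t else cc k with hxdef
      have h2 : (∏ k, Qind p (T' k) (x k)) = 1 := by
        refine prodQ_eq_one fun k => ?_
        by_cases hk : k = j
        · subst hk; simpa [hxdef] using hnot
        · simpa [hxdef, hk] using hccp k
      have h1 : (∏ k, Qind p (T k) (x k)) = 0 :=
        prodQ_eq_zero ⟨j, by simp [hxdef, ht]⟩
      have := hx x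
      rw [h1, h2] at this
      simp at this
      exact hD2 this
    intro j t
    constructor
    · refine main B₁ B₂ S S' hB₂ (fun x => by rw [hfx x, hB1, hB2]) (fun _ => ⟨c', hc'⟩) j t
    · refine main B₁ B₂ S' S hB₂ (fun x => by have h := (hfx x).symm; rw [← hB1, ← hB2] at h; exact h) (fun _ => ⟨c, hc⟩) j t
  exact ⟨hB1, hB2, funext fun j => Finset.ext (hSS j)⟩

/-- explicit segment of given type -/
private def segOf (p : ℕ) [NeZero p] (b : Bool) (j : ℕ) : Finset (ZMod p) :=
  if b then Finset.univ.filter (fun x => x.val ≤ j)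
  else Finset.univ.filter (fun x => ¬ x.val ≤ j)

private lemma segOf_isSegment {j : ℕ} (hj : j < p - 1) (b : Bool) :
    IsSegment p (segOf p b j) := by
  refine ⟨j, hj, ?_⟩
  cases b
  · right; intro x; simp [segOf]
  · left; intro x; simp [segOf]

private def segMap (p : ℕ) [Fact (Nat.Prime p)] (bj : Bool × Fin (p - 1)) :
    {S : Finset (ZMod p) // IsSegment p S} :=
  ⟨segOf p bj.1 bj.2, segOf_isSegment bj.2.2 bj.1⟩

private lemma segMap_bij : Function.Bijective (segMap p) := by
  have hp : 2 ≤ p := (Fact.out : p.Prime).two_le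
  constructor
  · rintro ⟨b, j⟩ ⟨b', j'⟩ h
    have h' : segOf p b j = segOf p b' j' := congrArg Subtype.val h
    have hb : b = b' := by
      have h0 := Finset.ext_iff.mp h' (0 : ZMod p)
      cases b <;> cases b' <;> simp [segOf, ZMod.val_zero] at h0 <;> rfl
    subst hb
    have hjj : (j : ℕ) = (j' : ℕ) := by
      have hv : ∀ m : Fin (p - 1), (((m : ℕ) : ZMod p)).val = (m : ℕ) :=
        fun m => ZMod.val_cast_of_lt (by have := m.2; omega)
      have h1 : (((j : ℕ) : ZMod p)) ∈ segOf p b j ↔ (((j : ℕ) : ZMod p)) ∈ segOf p b j' := by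
        rw [h']
      have h2 : (((j' : ℕ) : ZMod p)) ∈ segOf p b j ↔ (((j' : ℕ) : ZMod p)) ∈ segOf p b j' := by
        rw [h']
      cases b <;> simp [segOf, hv] at h1 h2 <;> omega
    exact Prod.ext rfl (Fin.ext hjj)
  · rintro ⟨S, j, hj, hS | hS⟩
    · refine ⟨(true, ⟨j, hj⟩), ?_⟩
      simp only [segMap, Subtype.mk.injEq]
      exact Subtype.ext (show segOf p true j = S from (Finset.ext fun x => by simp [segOf, hS x]).symm)
    · refine ⟨(false, ⟨j, hj⟩), ?_⟩
      simp only [segMap, Subtype.mk.injEq]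
      exact Subtype.ext (show segOf p false j = S from (Finset.ext fun x => by simp [segOf, hS x]).symm)

private lemma card_seg : Nat.card {S : Finset (ZMod p) // IsSegment p S} = 2 * (p - 1) := by
  rw [← Nat.card_congr (Equiv.ofBijective _ (segMap_bij (p := p)))]
  simp [Nat.card_eq_fintype_card]

end Stmt16Aux

/-- the number of functions of the form
`f(x) = B₂·∏ⱼ Q_{Sⱼ}(xⱼ) + B₁` with `B₁ ∈ F`, `B₂ ≠ 0` and segments `S₁,…,Sₙ`
(the NCFs in `n` variables with layer number `r = 1`) is `2^n (p−1)^{n+1} p`. -/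
theorem stmt16 (p n : ℕ) [Fact (Nat.Prime p)] (hn : 2 ≤ n) :
    Set.ncard {f : (Fin n → ZMod p) → ZMod p |
      ∃ (B₁ B₂ : ZMod p) (S : Fin n → Finset (ZMod p)),
        B₂ ≠ 0 ∧ (∀ j, IsSegment p (S j)) ∧
        f = fun x => B₂ * ∏ j, Qind p (S j) (x j) + B₁} =
    2 ^ n * (p - 1) ^ (n + 1) * p := by
  classical
  set g : ZMod p × {b : ZMod p // b ≠ 0} ×
      (Fin n → {S : Finset (ZMod p) // IsSegment p S}) → ((Fin n → ZMod p) → ZMod p) :=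
    fun P => fun x => (P.2.1 : ZMod p) * ∏ j, Qind p (P.2.2 j : Finset (ZMod p)) (x j) + P.1
    with hg
  have hset : {f : (Fin n → ZMod p) → ZMod p |
      ∃ (B₁ B₂ : ZMod p) (S : Fin n → Finset (ZMod p)),
        B₂ ≠ 0 ∧ (∀ j, IsSegment p (S j)) ∧
        f = fun x => B₂ * ∏ j, Qind p (S j) (x j) + B₁} = Set.range g := by
    ext f
    constructor
    · rintro ⟨B₁, B₂, S, hB₂, hS, rfl⟩
      exact ⟨(B₁, ⟨B₂, hB₂⟩, fun j => ⟨S j, hS j⟩), rfl⟩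
    · rintro ⟨⟨B₁, B₂, S⟩, rfl⟩
      exact ⟨B₁, B₂, fun j => (S j : Finset (ZMod p)), B₂.2, fun j => (S j).2, rfl⟩
  have hginj : Function.Injective g := by
    rintro ⟨B₁, B₂, S⟩ ⟨B₁', B₂', S'⟩ h
    obtain ⟨h1, h2, h3⟩ := stmt16_inj hn B₂.2 B₂'.2 (fun j => (S j).2) (fun j => (S' j).2) h
    refine Prod.ext h1 (Prod.ext (Subtype.ext h2) (funext fun j => Subtype.ext ?_))
    exact congrFun h3 j
  rw [hset, Set.ncard_eq_toFinset_card', Set.toFinset_range]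
  rw [Finset.card_image_of_injective _ hginj]
  have hcard : (Finset.univ : Finset (ZMod p × {b : ZMod p // b ≠ 0} ×
      (Fin n → {S : Finset (ZMod p) // IsSegment p S}))).card
      = p * ((p - 1) * (2 * (p - 1)) ^ n) := by
    rw [Finset.card_univ]
    rw [Fintype.card_prod, Fintype.card_prod, Fintype.card_fun]
    have c1 : Fintype.card (ZMod p) = p := ZMod.card p
    have c2 : Fintype.card {b : ZMod p // b ≠ 0} = p - 1 := by
      rw [Fintype.card_subtype_compl, Fintype.card_subtype_eq, ZMod.card]
    have c3 : Fintype.card {S : Finset (ZMod p) // IsSegment p S} = 2 * (p - 1) := by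
      rw [← Nat.card_eq_fintype_card]; exact card_seg
    rw [c1, c2, c3, Fintype.card_fin]
  rw [hcard, mul_pow]
  ring
end

section
/- Let p be a prime, F = F_p, and n ≥ 2. The number of distinct functions f : F^n → F defined by a canonical datum whose layer number r is at least 2 and whose last layer has at least two variables (k_r ≥ 2) equals 2^n p (p−1)^n ∑_{r=2}^{n−1} (p−1)^r [r! S(n,r) − n·(r−1)! S(n−1, r−1)]. -/
namespace Stmt18
set_option linter.unusedSectionVars false


variable {p n : ℕ} [Fact p.Prime]

lemma p_two_le : 2 ≤ p := (Fact.out : p.Prime).two_le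

lemma segNonempty {S : Finset (ZMod p)} (h : IsSegment p S) : S.Nonempty := by
  obtain ⟨j, hj, h | h⟩ := h
  · exact ⟨0, (h 0).2 (by simp [ZMod.val_zero])⟩
  · refine ⟨((p-1 : ℕ) : ZMod p), (h _).2 ?_⟩
    rw [ZMod.val_cast_of_lt (Nat.sub_lt (by omega : 0 < p) one_pos)]
    omega

lemma segNotMem {S : Finset (ZMod p)} (h : IsSegment p S) :
    ∃ a : ZMod p, a ∉ S := by
  obtain ⟨j, hj, h | h⟩ := h
  · refine ⟨((p-1 : ℕ) : ZMod p), fun hm => ?_⟩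
    rw [h, ZMod.val_cast_of_lt (Nat.sub_lt (by have := @p_two_le p _; omega) one_pos)] at hm
    omega
  · exact ⟨0, fun hm => by rw [h] at hm; exact hm (by simp [ZMod.val_zero])⟩

lemma Qind_eq_zero {S : Finset (ZMod p)} {a : ZMod p} (h : a ∈ S) : Qind p S a = 0 :=
  if_pos h

lemma Qind_eq_one {S : Finset (ZMod p)} {a : ZMod p} (h : a ∉ S) : Qind p S a = 1 :=
  if_neg h

/-- partial canonical datum : no cover condition, no last condition. -/
structure PD (p n : ℕ) where
  r : ℕ
  r_pos : 1 ≤ r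
  A : Fin r → Finset (Fin n)
  A_ne : ∀ i, (A i).Nonempty
  A_disj : ∀ i j, i ≠ j → Disjoint (A i) (A j)
  S : Fin n → Finset (ZMod p)
  S_seg : ∀ j, IsSegment p (S j)
  B : Fin (r + 1) → ZMod p
  B_ne : ∀ i : Fin (r + 1), 0 < (i : ℕ) → B i ≠ 0

namespace PD

variable (d : PD p n)

def An (i : ℕ) : Finset (Fin n) := if h : i < d.r then d.A ⟨i, h⟩ else ∅

def Bn (i : ℕ) : ZMod p := if h : i < d.r + 1 then d.B ⟨i, h⟩ else 0

def layer (i : ℕ) (x : Fin n → ZMod p) : ZMod p :=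
  ∏ j ∈ d.An i, Qind p (d.S j) (x j)

def eval (x : Fin n → ZMod p) : ZMod p :=
  nestEvalAux p (fun i => d.layer i x) d.Bn d.r 0

def good : Prop := 2 ≤ (d.An (d.r - 1)).card

lemma An_nonempty {i : ℕ} (h : i < d.r) : (d.An i).Nonempty := by
  rw [An, dif_pos h]; exact d.A_ne _

lemma An_disjoint {i j : ℕ} (h : i ≠ j) : Disjoint (d.An i) (d.An j) := by
  unfold An
  split <;> split <;> simp_all
  exact d.A_disj _ _ (by simp [Fin.ext_iff, h])

lemma Bn_ne {i : ℕ} (h1 : 0 < i) (h2 : i < d.r + 1) : d.Bn i ≠ 0 := by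
  rw [Bn, dif_pos h2]; exact d.B_ne _ h1

lemma layer_eq_one {i : ℕ} {x : Fin n → ZMod p}
    (h : ∀ j ∈ d.An i, Qind p (d.S j) (x j) = 1) : d.layer i x = 1 :=
  Finset.prod_eq_one h

lemma layer_eq_zero {i : ℕ} {x : Fin n → ZMod p} {j : Fin n}
    (hj : j ∈ d.An i) (h : x j ∈ d.S j) : d.layer i x = 0 :=
  Finset.prod_eq_zero hj (Qind_eq_zero h)

lemma layer_out_eq_one {i : ℕ} (h : d.r ≤ i) (x : Fin n → ZMod p) : d.layer i x = 1 := by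
  rw [layer, An, dif_neg (by omega)]; simp

lemma layer_congr {i : ℕ} {x y : Fin n → ZMod p} (h : ∀ j ∈ d.An i, x j = y j) :
    d.layer i x = d.layer i y :=
  Finset.prod_congr rfl fun j hj => by rw [h j hj]

end PD

/-- main summation lemma for nestEvalAux -/
lemma nest_sum (M B : ℕ → ZMod p) :
    ∀ (t k i : ℕ), t ≤ k → (∀ s, s < t → M (i + s) = 1) → (t = k ∨ M (i + t) = 0) →
      nestEvalAux p M B k i = ∑ s ∈ Finset.range (t + 1), B (i + s) := by
  intro t
  induction t with
  | zero =>
    intro k i _ _ h0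
    rcases h0 with h0 | h0
    · subst h0; simp [nestEvalAux]
    · match k with
      | 0 => simp [nestEvalAux]
      | k + 1 => simp only [nestEvalAux]; simp at h0; rw [h0]; ring_nf; simp
  | succ t ih =>
    intro k i htk h1 h0
    match k with
    | 0 => omega
    | k + 1 =>
      have hM : M i = 1 := by have := h1 0 (by omega); simpa using this
      simp only [nestEvalAux, hM, one_mul]
      rw [ih k (i+1) (by omega) (fun s hs => by
            have := h1 (s+1) (by omega); rwa [show i + (s+1) = i + 1 + s by ring] at this)
          (by rcases h0 with h0 | h0
              · left; omega
              · right; rwa [show i + 1 + t = i + (t+1) by ring])]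
      rw [Finset.sum_range_succ' (fun s => B (i + s)) (t+1)]
      simp only [Nat.add_zero]
      congr 1
      · exact Finset.sum_congr rfl fun s _ => by ring_nf
lemma nest_congr (M M' B : ℕ → ZMod p) :
    ∀ (k i : ℕ), (∀ s, i ≤ s → M s = M' s) →
      nestEvalAux p M B k i = nestEvalAux p M' B k i := by
  intro k
  induction k with
  | zero => intro i _; simp [nestEvalAux]
  | succ k ih =>
    intro i h
    simp only [nestEvalAux]
    rw [h i le_rfl, ih (i+1) (fun s hs => h s (by omega))]

lemma nest_shift (M B : ℕ → ZMod p) :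
    ∀ (k i : ℕ), nestEvalAux p (fun s => M (s+1)) (fun s => B (s+1)) k i
      = nestEvalAux p M B k (i+1) := by
  intro k
  induction k with
  | zero => intro i; simp [nestEvalAux]
  | succ k ih => intro i; simp only [nestEvalAux]; rw [ih (i+1)]

namespace PD

variable (d : PD p n)

lemma eval_pattern {x : Fin n → ZMod p} {t : ℕ} (ht : t ≤ d.r)
    (h1 : ∀ s, s < t → d.layer s x = 1) (h0 : t = d.r ∨ d.layer t x = 0) :
    d.eval x = ∑ s ∈ Finset.range (t + 1), d.Bn s := by
  have := nest_sum (p := p) (fun i => d.layer i x) d.Bn t d.r 0 ht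
    (fun s hs => by simpa using h1 s hs)
    (by simpa using h0)
  simpa [eval] using this

noncomputable def inS (j : Fin n) : ZMod p := (segNonempty (d.S_seg j)).choose

lemma inS_mem (j : Fin n) : d.inS j ∈ d.S j := (segNonempty (d.S_seg j)).choose_spec

noncomputable def outS (j : Fin n) : ZMod p := (segNotMem (d.S_seg j)).choose

lemma outS_not_mem (j : Fin n) : d.outS j ∉ d.S j := (segNotMem (d.S_seg j)).choose_spec

noncomputable def pt (U : Finset (Fin n)) : Fin n → ZMod p :=
  fun j => if j ∈ U then d.inS j else d.outS j

/-- The master point-evaluation lemma. -/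
lemma eval_upd_pt {U : Finset (Fin n)} {j : Fin n} {a : ZMod p} {t : ℕ} (ht : t ≤ d.r)
    (hU1 : ∀ s, s < t → ∀ w ∈ d.An s, w ≠ j → w ∉ U)
    (hj1 : ∀ s, s < t → j ∈ d.An s → a ∉ d.S j)
    (h0 : t = d.r ∨ (∃ w ∈ d.An t, w ≠ j ∧ w ∈ U) ∨ (j ∈ d.An t ∧ a ∈ d.S j)) :
    d.eval (Function.update (d.pt U) j a) = ∑ s ∈ Finset.range (t + 1), d.Bn s := by
  set x := Function.update (d.pt U) j a with hx
  apply d.eval_pattern ht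
  · intro s hs
    apply d.layer_eq_one
    intro w hw
    rcases eq_or_ne w j with rfl | hwj
    · rw [hx, Function.update_self]
      exact Qind_eq_one (hj1 s hs hw)
    · rw [hx, Function.update_of_ne hwj, pt, if_neg (hU1 s hs w hw hwj)]
      exact Qind_eq_one (d.outS_not_mem w)
  · rcases h0 with h0 | ⟨w, hw, hwj, hwU⟩ | ⟨hjA, haS⟩
    · exact Or.inl h0
    · refine Or.inr (d.layer_eq_zero hw ?_)
      rw [hx, Function.update_of_ne hwj, pt, if_pos hwU]
      exact d.inS_mem w
    · refine Or.inr (d.layer_eq_zero hjA ?_)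
      rw [hx, Function.update_self]; exact haS

end PD

namespace PD
variable {p n : ℕ} [Fact p.Prime] (d : PD p n)

/-- partial sums of the constants -/
noncomputable def P (t : ℕ) : ZMod p := ∑ s ∈ Finset.range (t + 1), d.Bn s

lemma P_succ (t : ℕ) : d.P (t + 1) = d.P t + d.Bn (t + 1) := Finset.sum_range_succ _ _

lemma P_ne (t : ℕ) (h1 : 0 < t + 1) (h2 : t + 1 < d.r + 1) : d.P (t + 1) ≠ d.P t := by
  rw [P_succ]
  intro h
  exact d.Bn_ne h1 h2 (add_eq_left.1 h)

/-- constancy on the hyperplane for first-layer variables -/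
lemma eval_const {j : Fin n} {a : ZMod p} (hj : j ∈ d.An 0) (ha : a ∈ d.S j) :
    ∀ x, x j = a → d.eval x = d.Bn 0 := by
  intro x hx
  have := d.eval_pattern (x := x) (t := 0) (Nat.one_le_iff_ne_zero.mp d.r_pos |> fun _ => by omega)
    (fun s hs => by omega) (Or.inr (d.layer_eq_zero hj (hx ▸ ha)))
  simpa using this

def Pc (f : (Fin n → ZMod p) → ZMod p) (j : Fin n) (a : ZMod p) : Prop :=
  ∀ x y : Fin n → ZMod p, x j = a → y j = a → f x = f y

lemma not_in_An {j : Fin n} {s t : ℕ} (hst : s ≠ t) (h : j ∈ d.An s) : j ∉ d.An t :=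
  fun h' => Finset.disjoint_left.1 (d.An_disjoint hst) h h'

/-- Main non-constancy lemma. -/
lemma not_const (hd : d.good) {j : Fin n} {a : ZMod p}
    (h : j ∉ d.An 0 ∨ a ∉ d.S j) : ¬ Pc d.eval j a := by
  classical
  have hr1 : 1 ≤ d.r := d.r_pos
  -- helper to finish
  have fin : ∀ (U V : Finset (Fin n)) (t u : ℕ),
      d.eval (Function.update (d.pt U) j a) = d.P t →
      d.eval (Function.update (d.pt V) j a) = d.P u →
      d.P t ≠ d.P u → ¬ Pc d.eval j a := by
    intro U V t u hU hV hne hPc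
    exact hne (by rw [← hU, ← hV]; exact hPc _ _ (Function.update_self _ _ _) (Function.update_self _ _ _))
  by_cases hA0 : ∀ w ∈ d.An 0, w = j
  · -- An 0 = {j}; hence j ∈ An 0 and a ∉ S j
    obtain ⟨w0, hw0⟩ := d.An_nonempty (by omega : 0 < d.r)
    have hjA0 : j ∈ d.An 0 := hA0 w0 hw0 ▸ hw0
    have haS : a ∉ d.S j := h.resolve_left (fun hh => hh hjA0)
    have hr2 : 2 ≤ d.r := by
      rcases Nat.lt_or_ge d.r 2 with hh | hh
      · exfalso
        have : d.r - 1 = 0 := by omega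
        rw [good, this] at hd
        have : (d.An 0).card ≤ 1 :=
          Finset.card_le_one.2 (fun x hx y hy => (hA0 x hx).trans (hA0 y hy).symm)
        omega
      · exact hh
    have hjA1 : j ∉ d.An 1 := d.not_in_An (by omega) hjA0
    obtain ⟨w1, hw1⟩ := d.An_nonempty (by omega : 1 < d.r)
    have hw1j : w1 ≠ j := fun hh => hjA1 (hh ▸ hw1)
    have e1 : d.eval (Function.update (d.pt {w1}) j a) = d.P 1 := by
      apply d.eval_upd_pt (by omega)
      · intro s hs w hw hwj
        interval_cases s
        simp only [Finset.mem_singleton]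
        intro hh
        exact hwj (hA0 w hw)
      · intro s hs hjs
        interval_cases s
        exact haS
      · exact Or.inr (Or.inl ⟨w1, hw1, hw1j, Finset.mem_singleton_self w1⟩)
    have e2 : d.eval (Function.update (d.pt (if h2 : 2 < d.r then {(d.An_nonempty h2).choose} else ∅)) j a) = d.P 2 := by
      by_cases h2 : 2 < d.r
      · rw [dif_pos h2]
        have hw2 := (d.An_nonempty h2).choose_spec
        set w2 := (d.An_nonempty h2).choose
        have hw2j : w2 ≠ j := fun hh => (d.not_in_An (show (2:ℕ) ≠ 0 by omega) hw2) (hh ▸ hjA0)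
        apply d.eval_upd_pt (by omega)
        · intro s hs w hw hwj
          simp only [Finset.mem_singleton]
          intro hh
          exact d.not_in_An (show (2:ℕ) ≠ s by omega) hw2 (hh ▸ hw)
        · intro s hs hjs
          interval_cases s
          · exact haS
          · exact absurd hjs hjA1
        · exact Or.inr (Or.inl ⟨w2, hw2, hw2j, Finset.mem_singleton_self w2⟩)
      · rw [dif_neg h2]
        apply d.eval_upd_pt (by omega)
        · intro s hs w hw hwj
          simp
        · intro s hs hjs
          interval_cases s
          · exact haS
          · exact absurd hjs hjA1
        · left; omega
    refine fin _ _ _ _ e2 e1 ?_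
    have hP := d.P_ne 1 (by omega) (by omega)
    norm_num at hP
    exact hP
  · push_neg at hA0
    obtain ⟨w0, hw0, hw0j⟩ := hA0
    have hjcond : j ∈ d.An 0 → a ∉ d.S j := fun hh => h.resolve_left (fun h' => h' hh)
    have e0 : d.eval (Function.update (d.pt {w0}) j a) = d.P 0 := by
      apply d.eval_upd_pt (by omega)
      · intro s hs; omega
      · intro s hs; omega
      · exact Or.inr (Or.inl ⟨w0, hw0, hw0j, Finset.mem_singleton_self w0⟩)
    rcases Nat.lt_or_ge d.r 2 with hr2 | hr2
    · -- r = 1 : use all-ones point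
      have e1 : d.eval (Function.update (d.pt ∅) j a) = d.P 1 := by
        apply d.eval_upd_pt (by omega)
        · intro s hs w hw hwj; simp
        · intro s hs hjs
          interval_cases s
          exact hjcond hjs
        · left; omega
      exact fin _ _ _ _ e1 e0 (d.P_ne 0 (by omega) (by omega))
    · by_cases hA1 : ∀ w ∈ d.An 1, w = j
      · -- An 1 = {j}
        obtain ⟨w1', hw1'⟩ := d.An_nonempty (by omega : 1 < d.r)
        have hjA1 : j ∈ d.An 1 := hA1 w1' hw1' ▸ hw1'
        have hjA0 : j ∉ d.An 0 := d.not_in_An (by omega) hjA1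
        have hr3 : 3 ≤ d.r := by
          rcases Nat.lt_or_ge d.r 3 with hh | hh
          · exfalso
            have hre : d.r - 1 = 1 := by omega
            rw [good, hre] at hd
            have : (d.An 1).card ≤ 1 :=
              Finset.card_le_one.2 (fun x hx y hy => (hA1 x hx).trans (hA1 y hy).symm)
            omega
          · exact hh
        by_cases haS : a ∈ d.S j
        · have e1 : d.eval (Function.update (d.pt ∅) j a) = d.P 1 := by
            apply d.eval_upd_pt (by omega)
            · intro s hs w hw hwj; simp
            · intro s hs hjs
              interval_cases s
              exact absurd hjs hjA0
            · exact Or.inr (Or.inr ⟨hjA1, haS⟩)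
          exact fin _ _ _ _ e1 e0 (d.P_ne 0 (by omega) (by omega))
        · -- a ∉ S j, An 1 = {j}, r ≥ 3
          obtain ⟨w2, hw2⟩ := d.An_nonempty (by omega : 2 < d.r)
          have hw2j : w2 ≠ j := fun hh => (d.not_in_An (show (2:ℕ) ≠ 1 by omega) hw2) (hh ▸ hjA1)
          have e2 : d.eval (Function.update (d.pt {w2}) j a) = d.P 2 := by
            apply d.eval_upd_pt (by omega)
            · intro s hs w hw hwj
              simp only [Finset.mem_singleton]
              intro hh
              exact d.not_in_An (show (2:ℕ) ≠ s by omega) hw2 (hh ▸ hw)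
            · intro s hs hjs
              interval_cases s
              · exact absurd hjs hjA0
              · exact haS
            · exact Or.inr (Or.inl ⟨w2, hw2, hw2j, Finset.mem_singleton_self w2⟩)
          have e3 : d.eval (Function.update (d.pt (if h3 : 3 < d.r then {(d.An_nonempty h3).choose} else ∅)) j a) = d.P 3 := by
            by_cases h3 : 3 < d.r
            · rw [dif_pos h3]
              have hw3 := (d.An_nonempty h3).choose_spec
              set w3 := (d.An_nonempty h3).choose
              have hw3j : w3 ≠ j := fun hh => (d.not_in_An (show (3:ℕ) ≠ 1 by omega) hw3) (hh ▸ hjA1)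
              apply d.eval_upd_pt (by omega)
              · intro s hs w hw hwj
                simp only [Finset.mem_singleton]
                intro hh
                exact d.not_in_An (show (3:ℕ) ≠ s by omega) hw3 (hh ▸ hw)
              · intro s hs hjs
                rcases eq_or_ne s 1 with rfl | hs1
                · exact haS
                · exact absurd hjs (d.not_in_An (show (1:ℕ) ≠ s from fun hh => hs1 hh.symm) hjA1)
              · exact Or.inr (Or.inl ⟨w3, hw3, hw3j, Finset.mem_singleton_self w3⟩)
            · rw [dif_neg h3]
              apply d.eval_upd_pt (by omega)
              · intro s hs w hw hwj; simp
              · intro s hs hjs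
                rcases eq_or_ne s 1 with rfl | hs1
                · exact haS
                · exact absurd hjs (d.not_in_An (show (1:ℕ) ≠ s from fun hh => hs1 hh.symm) hjA1)
              · left; omega
          by_cases hP : d.P 0 = d.P 2
          · refine fin _ _ _ _ e3 e0 ?_
            rw [hP]
            exact d.P_ne 2 (by omega) (by omega)
          · exact fin _ _ _ _ e2 e0 (fun hh => hP hh.symm)
      · -- exists w1 ∈ An 1, w1 ≠ j
        push_neg at hA1
        obtain ⟨w1, hw1, hw1j⟩ := hA1
        have e1 : d.eval (Function.update (d.pt {w1}) j a) = d.P 1 := by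
          apply d.eval_upd_pt (by omega)
          · intro s hs w hw hwj
            simp only [Finset.mem_singleton]
            intro hh
            exact d.not_in_An (show (1:ℕ) ≠ s by omega) hw1 (hh ▸ hw)
          · intro s hs hjs
            interval_cases s
            exact hjcond hjs
          · exact Or.inr (Or.inl ⟨w1, hw1, hw1j, Finset.mem_singleton_self w1⟩)
        exact fin _ _ _ _ e1 e0 (d.P_ne 0 (by omega) (by omega))

end PD

namespace PD
variable {p n : ℕ} [Fact p.Prime] (d : PD p n)

/-- unpinned point evaluation -/
lemma eval_pt {U : Finset (Fin n)} {t : ℕ} (ht : t ≤ d.r)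
    (hU1 : ∀ s, s < t → ∀ w ∈ d.An s, w ∉ U)
    (h0 : t = d.r ∨ ∃ w ∈ d.An t, w ∈ U) :
    d.eval (d.pt U) = d.P t := by
  apply d.eval_pattern ht
  · intro s hs
    apply d.layer_eq_one
    intro w hw
    rw [pt, if_neg (hU1 s hs w hw)]
    exact Qind_eq_one (d.outS_not_mem w)
  · rcases h0 with h0 | ⟨w, hw, hwU⟩
    · exact Or.inl h0
    · exact Or.inr (d.layer_eq_zero hw (by rw [pt, if_pos hwU]; exact d.inS_mem w))

def tail (hr : 2 ≤ d.r) : PD p n where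
  r := d.r - 1
  r_pos := by omega
  A := fun i => d.A ⟨i.1 + 1, by omega⟩
  A_ne := fun i => d.A_ne _
  A_disj := fun i j hij => d.A_disj _ _ (by simp [Fin.ext_iff]; omega)
  S := d.S
  S_seg := d.S_seg
  B := fun i => d.B ⟨i.1 + 1, by omega⟩
  B_ne := fun i _ => d.B_ne _ (by simp)

variable {hr : 2 ≤ d.r}

lemma tail_An (i : ℕ) : (d.tail hr).An i = d.An (i + 1) := by
  unfold An tail
  simp only
  split_ifs with h1 h2 h2
  · rfl
  · omega
  · omega
  · rfl

lemma tail_Bn (i : ℕ) : (d.tail hr).Bn i = d.Bn (i + 1) := by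
  unfold Bn tail
  simp only
  split_ifs with h1 h2 h2
  · rfl
  · omega
  · omega
  · rfl

lemma tail_layer (i : ℕ) (x : Fin n → ZMod p) :
    (d.tail hr).layer i x = d.layer (i + 1) x := by
  unfold layer
  rw [tail_An]
  rfl

lemma tail_good (hd : d.good) : (d.tail hr).good := by
  unfold good at hd ⊢
  rw [tail_An, show (d.tail hr).r = d.r - 1 from rfl,
    show d.r - 1 - 1 + 1 = d.r - 1 from by omega]
  exact hd

lemma tail_eval (x : Fin n → ZMod p) :
    (d.tail hr).eval x = nestEvalAux p (fun i => d.layer i x) d.Bn (d.r - 1) 1 := by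
  unfold eval
  rw [show (d.tail hr).r = d.r - 1 from rfl]
  rw [show (fun i => (d.tail hr).layer i x) = (fun i => d.layer (i+1) x) from
      funext fun i => d.tail_layer i x]
  rw [show (d.tail hr).Bn = (fun i => d.Bn (i+1)) from funext fun i => d.tail_Bn i]
  exact nest_shift (fun i => d.layer i x) d.Bn (d.r - 1) 0

lemma eval_decomp (x : Fin n → ZMod p) :
    d.eval x = d.layer 0 x * (d.tail hr).eval x + d.Bn 0 := by
  rw [tail_eval, eval]
  rw [show d.r = d.r - 1 + 1 from by omega]
  rfl

lemma tail_eval_congr {x y : Fin n → ZMod p}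
    (h : ∀ s, 1 ≤ s → ∀ j ∈ d.An s, x j = y j) :
    (d.tail hr).eval x = (d.tail hr).eval y := by
  unfold eval
  apply nest_congr
  intro s _
  rw [tail_layer, tail_layer]
  exact d.layer_congr (fun j hj => h (s+1) (by omega) j hj)

/-- recovery of the first layer data -/
lemma mem_An0_iff (hd : d.good) (j : Fin n) :
    j ∈ d.An 0 ↔ ∃ a, Pc d.eval j a := by
  constructor
  · intro hj
    refine ⟨d.inS j, fun x y hx hy => ?_⟩
    rw [d.eval_const hj (d.inS_mem j) x hx, d.eval_const hj (d.inS_mem j) y hy]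
  · rintro ⟨a, hPc⟩
    by_contra hj
    exact d.not_const hd (Or.inl hj) hPc

lemma mem_S_iff (hd : d.good) {j : Fin n} (hj : j ∈ d.An 0) (a : ZMod p) :
    a ∈ d.S j ↔ Pc d.eval j a := by
  constructor
  · intro ha
    intro x y hx hy
    rw [d.eval_const hj ha x hx, d.eval_const hj ha y hy]
  · intro hPc
    by_contra ha
    exact d.not_const hd (Or.inr ha) hPc

end PD

open PD

variable {p n : ℕ} [Fact p.Prime]

section Uniq
variable {d d' : PD p n}

lemma step_An0 (hd : d.good) (hd' : d'.good) (he : d.eval = d'.eval) :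
    d.An 0 = d'.An 0 := by
  ext j
  rw [d.mem_An0_iff hd, d'.mem_An0_iff hd', he]

lemma step_S (hd : d.good) (hd' : d'.good) (he : d.eval = d'.eval)
    {j : Fin n} (hj : j ∈ d.An 0) : d.S j = d'.S j := by
  have hj' : j ∈ d'.An 0 := step_An0 hd hd' he ▸ hj
  ext a
  rw [d.mem_S_iff hd hj, d'.mem_S_iff hd' hj', he]

lemma step_Bn0 (hd : d.good) (hd' : d'.good) (he : d.eval = d'.eval) :
    d.Bn 0 = d'.Bn 0 := by
  obtain ⟨j, hj⟩ := d.An_nonempty d.r_pos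
  have hj' : j ∈ d'.An 0 := step_An0 hd hd' he ▸ hj
  have ha' : d.inS j ∈ d'.S j := step_S hd hd' he hj ▸ d.inS_mem j
  have h1 := d.eval_const hj (d.inS_mem j) (fun _ => d.inS j) rfl
  have h2 := d'.eval_const hj' ha' (fun _ => d.inS j) rfl
  rw [← h1, ← h2, he]

lemma step_layer0 (hd : d.good) (hd' : d'.good) (he : d.eval = d'.eval) :
    d.layer 0 = d'.layer 0 := by
  funext x
  unfold PD.layer
  rw [← step_An0 hd hd' he]
  exact Finset.prod_congr rfl fun j hj => by rw [step_S hd hd' he hj]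

/-- impossible that r = 1 while r' ≥ 2 -/
lemma aux_r1 (hd : d.good) (hd' : d'.good) (he : d.eval = d'.eval)
    (h1 : d.r = 1) (h2 : 2 ≤ d'.r) : False := by
  have hlay := step_layer0 hd hd' he
  obtain ⟨w1, hw1⟩ := d'.An_nonempty (by omega : 1 < d'.r)
  -- y1 : layer'1 = 0 pattern
  have e1 : d'.eval (d'.pt {w1}) = d'.P 1 := by
    apply d'.eval_pt (by omega)
    · intro s hs w hw
      interval_cases s
      simp only [Finset.mem_singleton]
      intro hh
      exact (d'.not_in_An (show (1:ℕ) ≠ 0 by omega) hw1) (hh ▸ hw)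
    · exact Or.inr ⟨w1, hw1, Finset.mem_singleton_self w1⟩
  have e2 : d'.eval (d'.pt (if h3 : 2 < d'.r then {(d'.An_nonempty h3).choose} else ∅)) = d'.P 2 := by
    by_cases h3 : 2 < d'.r
    · rw [dif_pos h3]
      have hw2 := (d'.An_nonempty h3).choose_spec
      set w2 := (d'.An_nonempty h3).choose
      apply d'.eval_pt (by omega)
      · intro s hs w hw
        simp only [Finset.mem_singleton]
        intro hh
        exact (d'.not_in_An (show (2:ℕ) ≠ s by omega) hw2) (hh ▸ hw)
      · exact Or.inr ⟨w2, hw2, Finset.mem_singleton_self w2⟩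
    · rw [dif_neg h3]
      apply d'.eval_pt (by omega)
      · intro s hs w hw; simp
      · left; omega
  -- d side : eval of any point with layer0 = 1 equals P 1
  have dval : ∀ U : Finset (Fin n), (∀ w ∈ d'.An 0, w ∉ U) → d.eval (d'.pt U) = d.P 1 := by
    intro U hU
    apply d.eval_pattern (by omega)
    · intro s hs
      interval_cases s
      rw [hlay]
      apply d'.layer_eq_one
      intro w hw
      rw [PD.pt, if_neg (hU w hw)]
      exact Qind_eq_one (d'.outS_not_mem w)
    · left; omega
  have dv1 : d.eval (d'.pt {w1}) = d.P 1 := by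
    apply dval
    intro w hw
    simp only [Finset.mem_singleton]
    intro hh
    exact (d'.not_in_An (show (1:ℕ) ≠ 0 by omega) hw1) (hh ▸ hw)
  have dv2 : d.eval (d'.pt (if h3 : 2 < d'.r then {(d'.An_nonempty h3).choose} else ∅)) = d.P 1 := by
    apply dval
    by_cases h3 : 2 < d'.r
    · rw [dif_pos h3]
      have hw2 := (d'.An_nonempty h3).choose_spec
      intro w hw
      simp only [Finset.mem_singleton]
      intro hh
      exact (d'.not_in_An (show (0:ℕ) ≠ 2 by omega) hw) (hh ▸ hw2)
    · rw [dif_neg h3]; intro w hw; simp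
  have : d'.P 1 = d'.P 2 := by
    rw [← e1, ← e2, ← he, dv1, dv2]
  have hne := d'.P_ne 1 (by omega) (by omega)
  norm_num at hne
  exact hne this.symm

theorem uniq : ∀ k (d d' : PD p n), d.r ≤ k → d.good → d'.good → d.eval = d'.eval →
    d.r = d'.r ∧ (∀ i, d.An i = d'.An i) ∧ (∀ i, d.Bn i = d'.Bn i) ∧
      (∀ j i, j ∈ d.An i → d.S j = d'.S j) := by
  intro k
  induction k with
  | zero => intro d d' hk _ _ _; have := d.r_pos; omega
  | succ k ih =>
    intro d d' hk hd hd' he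
    have hA0 := step_An0 hd hd' he
    have hS0 := fun j hj => step_S hd hd' he (j := j) hj
    have hB0 := step_Bn0 hd hd' he
    have hlay := step_layer0 hd hd' he
    rcases Nat.lt_or_ge d.r 2 with hr2 | hr2
    · -- d.r = 1
      have hdr : d.r = 1 := by have := d.r_pos; omega
      have hdr' : d'.r = 1 := by
        by_contra hh
        exact aux_r1 hd hd' he hdr (by have := d'.r_pos; omega)
      refine ⟨by omega, ?_, ?_, ?_⟩
      · intro i
        rcases Nat.eq_zero_or_pos i with rfl | hi
        · exact hA0
        · rw [PD.An, PD.An, dif_neg (by omega), dif_neg (by omega)]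
      · -- constants
        have heval1 : d.eval (d.pt ∅) = d.P 1 := by
          apply d.eval_pt (by omega)
          · intro s hs w hw; simp
          · left; omega
        have heval1' : d'.eval (d.pt ∅) = d'.P 1 := by
          apply d'.eval_pattern (by omega)
          · intro s hs
            interval_cases s
            rw [← hlay]
            apply d.layer_eq_one
            intro w hw
            rw [PD.pt, if_neg (Finset.notMem_empty w)]
            exact Qind_eq_one (d.outS_not_mem w)
          · left; omega
        have hP1 : d.P 1 = d'.P 1 := by rw [← heval1, ← heval1', he]
        have hB1 : d.Bn 1 = d'.Bn 1 := by
          have h1 : d.P 1 = d.P 0 + d.Bn 1 := d.P_succ 0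
          have h2 : d'.P 1 = d'.P 0 + d'.Bn 1 := d'.P_succ 0
          have h0 : d.P 0 = d'.P 0 := by
            unfold PD.P
            simp [hB0]
          rw [h1, h2, h0] at hP1
          exact add_left_cancel hP1
        intro i
        match i with
        | 0 => exact hB0
        | 1 => exact hB1
        | (m+2) =>
          rw [PD.Bn, PD.Bn, dif_neg (by omega), dif_neg (by omega)]
      · intro j i hj
        rcases Nat.eq_zero_or_pos i with rfl | hi
        · exact hS0 j hj
        · rw [PD.An, dif_neg (by omega)] at hj
          exact absurd hj (Finset.notMem_empty j)
    · -- d.r ≥ 2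
      have hr2' : 2 ≤ d'.r := by
        by_contra hh
        exact aux_r1 hd' hd he.symm (by have := d'.r_pos; omega) hr2
      -- tails
      have htg := d.tail_good (hr := hr2) hd
      have htg' := d'.tail_good (hr := hr2') hd'
      have hte : (d.tail hr2).eval = (d'.tail hr2').eval := by
        funext x
        set z : Fin n → ZMod p := fun j => if j ∈ d.An 0 then d.outS j else x j with hz
        have hzx : ∀ s, 1 ≤ s → ∀ j ∈ d.An s, z j = x j := by
          intro s hs j hj
          rw [hz]
          simp only
          rw [if_neg (d.not_in_An (by omega) hj)]
        have hzx' : ∀ s, 1 ≤ s → ∀ j ∈ d'.An s, z j = x j := by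
          intro s hs j hj
          rw [hz]
          simp only
          rw [if_neg (by rw [hA0]; exact d'.not_in_An (by omega) hj)]
        have hl0 : d.layer 0 z = 1 := by
          apply d.layer_eq_one
          intro w hw
          rw [hz]
          simp only
          rw [if_pos hw]
          exact Qind_eq_one (d.outS_not_mem w)
        have hl0' : d'.layer 0 z = 1 := by rw [← hlay]; exact hl0
        have h1 := d.eval_decomp (hr := hr2) z
        have h2 := d'.eval_decomp (hr := hr2') z
        rw [hl0, one_mul] at h1
        rw [hl0', one_mul] at h2
        have : (d.tail hr2).eval z = (d'.tail hr2').eval z := by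
          have := he ▸ h1
          rw [he] at h1  -- d'.eval z = tail.eval z + Bn 0
          rw [h1] at h2
          have hcan : (d.tail hr2).eval z + d.Bn 0 = (d'.tail hr2').eval z + d'.Bn 0 := h2
          rw [hB0] at hcan
          exact add_right_cancel hcan
        calc (d.tail hr2).eval x = (d.tail hr2).eval z := (d.tail_eval_congr hzx).symm
          _ = (d'.tail hr2').eval z := this
          _ = (d'.tail hr2').eval x := d'.tail_eval_congr hzx'
      obtain ⟨ihr, ihA, ihB, ihS⟩ := ih (d.tail hr2) (d'.tail hr2')
        (show (d.tail hr2).r ≤ k from by show d.r - 1 ≤ k; omega) htg htg' hte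
      rw [show (d.tail hr2).r = d.r - 1 from rfl, show (d'.tail hr2').r = d'.r - 1 from rfl] at ihr
      refine ⟨by omega, ?_, ?_, ?_⟩
      · intro i
        match i with
        | 0 => exact hA0
        | (m+1) =>
          have := ihA m
          rwa [d.tail_An, d'.tail_An] at this
      · intro i
        match i with
        | 0 => exact hB0
        | (m+1) =>
          have := ihB m
          rwa [d.tail_Bn, d'.tail_Bn] at this
      · intro j i hj
        match i with
        | 0 => exact hS0 j hj
        | (m+1) =>
          have hjt : j ∈ (d.tail hr2).An m := by rw [d.tail_An]; exact hj
          exact ihS j m hjt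

end Uniq


open Finset

/-- The inclusion–exclusion count of surjections between finite types, in ℚ. -/
lemma card_surj_formula (α β : Type*) [Fintype α] [Fintype β] :
    (Nat.card {f : α → β // Function.Surjective f} : ℚ) =
      ∑ t ∈ range (Fintype.card β + 1),
        (-1 : ℚ) ^ t * ((Fintype.card β).choose t : ℚ) *
          ((Fintype.card β - t : ℕ) : ℚ) ^ (Fintype.card α) := by
  classical
  have key : ∀ T : Finset β,
      (((univ : Finset (α → β)).filter (fun f => ∀ a, f a ∉ T)).card : ℚ) =
        ((Fintype.card β - T.card : ℕ) : ℚ) ^ (Fintype.card α) := by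
    intro T
    have h1 : ((univ : Finset (α → β)).filter (fun f => ∀ a, f a ∉ T)).card
        = Fintype.card {f : α → β // ∀ a, f a ∉ T} := (Fintype.card_subtype _).symm
    have h2 : Fintype.card {f : α → β // ∀ a, f a ∉ T}
        = Fintype.card (α → {b : β // b ∉ T}) := by
      apply Fintype.card_congr
      exact ⟨fun f a => ⟨f.1 a, f.2 a⟩, fun g => ⟨fun a => (g a).1, fun a => (g a).2⟩,
        fun f => Subtype.ext rfl, fun g => rfl⟩
    have h3 : Fintype.card {b : β // b ∉ T} = Fintype.card β - T.card := by
      rw [Fintype.card_subtype]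
      have : (univ : Finset β).filter (fun b => b ∉ T) = Tᶜ := by
        ext b; simp [Finset.mem_compl]
      rw [this, Finset.card_compl]
    rw [h1, h2, Fintype.card_fun, h3]; push_cast; ring
  have swap :
      ∑ T ∈ (univ : Finset β).powerset,
        (-1:ℚ)^T.card * (((univ : Finset (α → β)).filter (fun f => ∀ a, f a ∉ T)).card : ℚ)
      = (Nat.card {f : α → β // Function.Surjective f} : ℚ) := by
    have hcf : ∀ T : Finset β,
        (((univ : Finset (α → β)).filter (fun f => ∀ a, f a ∉ T)).card : ℚ)
          = ∑ f : α → β, (if ∀ a, f a ∉ T then (1:ℚ) else 0) := by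
      intro T
      rw [Finset.sum_boole, Nat.cast_inj.2 rfl]
    calc ∑ T ∈ (univ : Finset β).powerset,
          (-1:ℚ)^T.card * (((univ : Finset (α → β)).filter (fun f => ∀ a, f a ∉ T)).card : ℚ)
        = ∑ T ∈ (univ : Finset β).powerset, ∑ f : α → β,
            (-1:ℚ)^T.card * (if ∀ a, f a ∉ T then (1:ℚ) else 0) := by
          refine Finset.sum_congr rfl fun T _ => ?_
          rw [hcf, Finset.mul_sum]
      _ = ∑ f : α → β, ∑ T ∈ (univ : Finset β).powerset,
            (-1:ℚ)^T.card * (if ∀ a, f a ∉ T then (1:ℚ) else 0) := Finset.sum_comm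
      _ = ∑ f : α → β, (if Function.Surjective f then (1:ℚ) else 0) := by
          refine Finset.sum_congr rfl fun f _ => ?_
          set Rf : Finset β := univ.filter (fun b => ∀ a, f a ≠ b) with hRf
          have hcond : ∀ T : Finset β, (∀ a, f a ∉ T) ↔ T ⊆ Rf := by
            intro T
            constructor
            · intro h b hb
              rw [hRf]
              simp only [Finset.mem_filter, Finset.mem_univ, true_and]
              intro a ha
              exact h a (ha ▸ hb)
            · intro h a ha
              have hmem := h ha
              rw [hRf] at hmem
              simp only [Finset.mem_filter, Finset.mem_univ, true_and] at hmem
              exact hmem a rfl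
          have e1 : ∀ T : Finset β, (-1:ℚ)^T.card * (if ∀ a, f a ∉ T then (1:ℚ) else 0)
              = if T ⊆ Rf then (-1:ℚ)^T.card else 0 := by
            intro T
            by_cases h : ∀ a, f a ∉ T
            · rw [if_pos h, if_pos ((hcond T).1 h), mul_one]
            · rw [if_neg h, if_neg (fun hs => h ((hcond T).2 hs)), mul_zero]
          rw [Finset.sum_congr rfl (fun T _ => e1 T), ← Finset.sum_filter]
          have e2 : (univ : Finset β).powerset.filter (· ⊆ Rf) = Rf.powerset := by
            ext T; simp
          rw [e2]
          have e3 : (∑ T ∈ Rf.powerset, (-1:ℚ)^T.card)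
              = ((∑ T ∈ Rf.powerset, (-1:ℤ)^T.card : ℤ) : ℚ) := by push_cast; rfl
          rw [e3, Finset.sum_powerset_neg_one_pow_card]
          have e4 : (Rf = ∅) ↔ Function.Surjective f := by
            rw [hRf, Finset.filter_eq_empty_iff]
            constructor
            · intro h b
              have := h (Finset.mem_univ b)
              push_neg at this
              exact this
            · intro h b _
              push_neg
              exact h b
          by_cases hs : Function.Surjective f
          · rw [if_pos (e4.2 hs), if_pos hs]; norm_num
          · rw [if_neg (fun hh => hs (e4.1 hh)), if_neg hs]; norm_num
      _ = (Nat.card {f : α → β // Function.Surjective f} : ℚ) := by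
          rw [Finset.sum_boole, Nat.card_eq_fintype_card, Fintype.card_subtype]
  calc (Nat.card {f : α → β // Function.Surjective f} : ℚ)
      = ∑ T ∈ (univ : Finset β).powerset,
          (-1:ℚ)^T.card * ((Fintype.card β - T.card : ℕ) : ℚ) ^ (Fintype.card α) := by
        rw [← swap]
        exact Finset.sum_congr rfl fun T _ => by rw [key]
    _ = ∑ m ∈ range (Fintype.card β + 1), (Fintype.card β).choose m
          • ((-1:ℚ)^m * ((Fintype.card β - m : ℕ) : ℚ) ^ (Fintype.card α)) := by
        have := Finset.sum_powerset_apply_card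
          (f := fun m => (-1:ℚ)^m * ((Fintype.card β - m : ℕ) : ℚ) ^ (Fintype.card α))
          (x := (univ : Finset β))
        simpa [Finset.card_univ] using this
    _ = _ := by
        refine Finset.sum_congr rfl fun t _ => ?_
        rw [nsmul_eq_mul]
        ring


open Finset

def IsSegment (p : ℕ) (S : Finset (ZMod p)) : Prop :=
  ∃ j : ℕ, j < p - 1 ∧
    ((∀ x : ZMod p, x ∈ S ↔ x.val ≤ j) ∨ (∀ x : ZMod p, x ∈ S ↔ ¬ x.val ≤ j))

variable (p : ℕ) [Fact p.Prime]

lemma natCard_sigma {ι : Type*} [Fintype ι] (γ : ι → Type*) [∀ i, Finite (γ i)] :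
    Nat.card (Σ i, γ i) = ∑ i, Nat.card (γ i) := by
  classical
  haveI := fun i => Fintype.ofFinite (γ i)
  rw [Nat.card_eq_fintype_card, Fintype.card_sigma]
  exact Finset.sum_congr rfl fun i _ => (Nat.card_eq_fintype_card).symm

noncomputable def segFun : Fin (p-1) × Bool → {S : Finset (ZMod p) // IsSegment p S} :=
  fun jb =>
    ⟨if jb.2 then univ.filter (fun x : ZMod p => ¬ x.val ≤ jb.1.1)
      else univ.filter (fun x : ZMod p => x.val ≤ jb.1.1), by
      rcases jb with ⟨j, b⟩
      cases b
      · exact ⟨j.1, j.2, Or.inl (fun x => by simp)⟩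
      · exact ⟨j.1, j.2, Or.inr (fun x => by simp)⟩⟩

lemma segFun_bij : Function.Bijective (segFun p) := by
  have hp : 2 ≤ p := (Fact.out : p.Prime).two_le
  constructor
  · rintro ⟨j, b⟩ ⟨j', b'⟩ h
    have hs := congrArg Subtype.val h
    simp only [segFun] at hs
    have h0 : ∀ (j : Fin (p-1)), (0 : ZMod p) ∈ univ.filter (fun x : ZMod p => x.val ≤ j.1) := by
      intro j; simp [ZMod.val_zero]
    have h0' : ∀ (j : Fin (p-1)), (0 : ZMod p) ∉ univ.filter (fun x : ZMod p => ¬ x.val ≤ j.1) := by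
      intro j; simp [ZMod.val_zero]
    have hbb : b = b' := by
      cases b <;> cases b' <;> simp only [if_true, if_false, Bool.false_eq_true] at hs <;>
        first
          | rfl
          | (exfalso
             first
               | (exact h0' j' (hs ▸ h0 j))
               | (exact h0' j (hs.symm ▸ h0 j')))
    subst hbb
    have hjj : j = j' := by
      by_contra hne
      have hlt : j.1 ≠ j'.1 := fun hh => hne (Fin.ext hh)
      -- distinguish using the element with value max j j'
      rcases Nat.lt_or_ge j.1 j'.1 with hl | hl
      · have hx : ((j'.1 : ℕ) : ZMod p).val = j'.1 := ZMod.val_cast_of_lt (by omega)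
        cases b <;> simp only [if_true, if_false, Bool.false_eq_true] at hs
        all_goals {
          have hmem : ∀ P Q : Finset (ZMod p), P = Q → (((j'.1 : ℕ) : ZMod p) ∈ P ↔ ((j'.1 : ℕ) : ZMod p) ∈ Q) := fun P Q hPQ => by rw [hPQ]
          have hiff := hmem _ _ hs
          simp only [Finset.mem_filter, Finset.mem_univ, true_and, hx] at hiff
          omega }
      · have hgt : j'.1 < j.1 := by omega
        have hx : ((j.1 : ℕ) : ZMod p).val = j.1 := ZMod.val_cast_of_lt (by omega)
        cases b <;> simp only [if_true, if_false, Bool.false_eq_true] at hs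
        all_goals {
          have hmem : ∀ P Q : Finset (ZMod p), P = Q → (((j.1 : ℕ) : ZMod p) ∈ P ↔ ((j.1 : ℕ) : ZMod p) ∈ Q) := fun P Q hPQ => by rw [hPQ]
          have hiff := hmem _ _ hs
          simp only [Finset.mem_filter, Finset.mem_univ, true_and, hx] at hiff
          omega }
    exact Prod.ext hjj rfl
  · rintro ⟨S, j, hj, hside | hside⟩
    · refine ⟨(⟨j, hj⟩, false), Subtype.ext ?_⟩
      simp only [segFun, Bool.false_eq_true, if_false]
      ext x
      simp [hside x]
    · refine ⟨(⟨j, hj⟩, true), Subtype.ext ?_⟩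
      simp only [segFun, if_true]
      ext x
      simp [hside x]

lemma card_seg : Nat.card {S : Finset (ZMod p) // IsSegment p S} = 2 * (p - 1) := by
  rw [← Nat.card_eq_of_bijective _ (segFun_bij p)]
  simp [Nat.card_eq_fintype_card, mul_comm]

lemma card_Bsp (r : ℕ) :
    Nat.card {B : Fin (r+1) → ZMod p // ∀ i : Fin (r+1), 0 < (i:ℕ) → B i ≠ 0}
      = p * (p-1)^r := by
  classical
  have hg : Function.Bijective
      (fun cv : ZMod p × (Fin r → {b : ZMod p // b ≠ 0}) =>
        (⟨fun i => Fin.cases cv.1 (fun m => (cv.2 m).1) i, by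
          intro i hi
          rcases i with ⟨iv, hiv⟩
          match iv, hiv with
          | 0, _ => simp at hi
          | (m+1), hm =>
            have : (⟨m+1, hm⟩ : Fin (r+1)) = Fin.succ ⟨m, by omega⟩ := rfl
            rw [this]
            simpa using (cv.2 _).2⟩ :
          {B : Fin (r+1) → ZMod p // ∀ i : Fin (r+1), 0 < (i:ℕ) → B i ≠ 0})) := by
    constructor
    · rintro ⟨c, v⟩ ⟨c', v'⟩ h
      have hf := congrArg Subtype.val h
      simp only at hf
      have h0 : c = c' := by
        have := congrFun hf 0
        simpa using this
      have h1 : v = v' := by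
        funext m
        have := congrFun hf (Fin.succ m)
        simp only [Fin.cases_succ] at this
        exact Subtype.ext this
      rw [h0, h1]
    · rintro ⟨B, hB⟩
      refine ⟨(B 0, fun m => ⟨B (Fin.succ m), hB _ (by simp)⟩), Subtype.ext ?_⟩
      funext i
      rcases i with ⟨iv, hiv⟩
      match iv, hiv with
      | 0, _ => simp
      | (m+1), hm =>
        have : (⟨m+1, hm⟩ : Fin (r+1)) = Fin.succ ⟨m, by omega⟩ := rfl
        rw [this]
        simp
  rw [← Nat.card_eq_of_bijective _ hg, Nat.card_prod, Nat.card_eq_fintype_card,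
    Nat.card_eq_fintype_card]
  have h1 : Fintype.card (ZMod p) = p := ZMod.card p
  have h2 : Fintype.card (Fin r → {b : ZMod p // b ≠ 0}) = (p-1)^r := by
    rw [Fintype.card_fun]
    congr 1
    · have : Fintype.card {b : ZMod p // b ≠ 0} = Fintype.card (ZMod p) - 1 := by
        rw [Fintype.card_subtype_compl, Fintype.card_subtype_eq]
      rw [this, ZMod.card]
    · simp
  rw [h1, h2]



open Finset

lemma natCard_sigma' {ι : Type*} [Fintype ι] (γ : ι → Type*) [∀ i, Finite (γ i)] :
    Nat.card (Σ i, γ i) = ∑ i, Nat.card (γ i) := by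
  classical
  haveI := fun i => Fintype.ofFinite (γ i)
  rw [Nat.card_eq_fintype_card, Fintype.card_sigma]
  exact Finset.sum_congr rfl fun i _ => (Nat.card_eq_fintype_card).symm

variable {n r : ℕ}

def fib (φ : Fin n → Fin r) (c : Fin r) : Finset (Fin n) := univ.filter (fun v => φ v = c)

lemma card_split (hr : 1 ≤ r) (c : Fin r) :
    Nat.card {φ : Fin n → Fin r // Function.Surjective φ}
      = Nat.card {φ : Fin n → Fin r // Function.Surjective φ ∧ 2 ≤ (fib φ c).card}
        + Nat.card {φ : Fin n → Fin r // Function.Surjective φ ∧ (fib φ c).card = 1} := by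
  classical
  simp only [Nat.card_eq_fintype_card, Fintype.card_subtype]
  rw [← Finset.card_union_of_disjoint]
  · congr 1
    ext φ
    simp only [Finset.mem_filter, Finset.mem_univ, true_and, Finset.mem_union]
    constructor
    · intro hs
      obtain ⟨v, hv⟩ := hs c
      have hpos : 0 < (fib φ c).card :=
        Finset.card_pos.2 ⟨v, by simp [fib, hv]⟩
      rcases Nat.lt_or_ge (fib φ c).card 2 with h | h
      · exact Or.inr ⟨hs, by omega⟩
      · exact Or.inl ⟨hs, h⟩
    · rintro (⟨hs, _⟩ | ⟨hs, _⟩) <;> exact hs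
  · rw [Finset.disjoint_filter]
    rintro φ _ ⟨_, h2⟩ ⟨_, h1⟩
    omega

/-- surjections with singleton fiber at `c` are an `n`-fold sum of smaller surjections -/
lemma card_single (c : Fin r) :
    Nat.card {φ : Fin n → Fin r // Function.Surjective φ ∧ (fib φ c).card = 1}
      = ∑ v : Fin n,
          Nat.card {ψ : {w : Fin n // w ≠ v} → {e : Fin r // e ≠ c} // Function.Surjective ψ} := by
  classical
  rw [← natCard_sigma']
  apply Eq.symm
  apply Nat.card_eq_of_bijective
    (fun vψ : Σ v : Fin n, {ψ : {w : Fin n // w ≠ v} → {e : Fin r // e ≠ c} // Function.Surjective ψ} =>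
      (⟨fun w => if h : w = vψ.1 then c else (vψ.2.1 ⟨w, h⟩).1, by
        constructor
        · intro e
          rcases eq_or_ne e c with rfl | he
          · exact ⟨vψ.1, by simp⟩
          · obtain ⟨w, hw⟩ := vψ.2.2 ⟨e, he⟩
            refine ⟨w.1, ?_⟩
            beta_reduce
            rw [dif_neg w.2, Subtype.eta, hw]
        · have hfib : fib (fun w => if h : w = vψ.1 then c else (vψ.2.1 ⟨w, h⟩).1) c = {vψ.1} := by
            ext w
            simp only [fib, Finset.mem_filter, Finset.mem_univ, true_and, Finset.mem_singleton]
            constructor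
            · intro hw
              by_contra hne
              rw [dif_neg hne] at hw
              exact (vψ.2.1 ⟨w, hne⟩).2 hw
            · rintro rfl; simp
          rw [hfib, Finset.card_singleton]⟩ :
        {φ : Fin n → Fin r // Function.Surjective φ ∧ (fib φ c).card = 1}))
  constructor
  · rintro ⟨v, ψ, hψ⟩ ⟨v', ψ', hψ'⟩ h
    have hf := congrArg Subtype.val h
    simp only at hf
    have hvv : v = v' := by
      by_contra hne
      have h1 := congrFun hf v
      rw [dif_pos rfl, dif_neg hne] at h1
      exact (ψ' ⟨v, hne⟩).2 h1.symm
    subst hvv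
    have hpsi : ψ = ψ' := by
      funext w
      have h1 := congrFun hf w.1
      rw [dif_neg w.2, dif_neg w.2] at h1
      exact Subtype.ext h1
    subst hpsi
    rfl
  · rintro ⟨φ, hs, h1⟩
    obtain ⟨v, hv⟩ := Finset.card_eq_one.1 h1
    have hvmem : φ v = c := by
      have : v ∈ fib φ c := hv ▸ Finset.mem_singleton_self v
      simpa [fib] using this
    have hne : ∀ w : Fin n, w ≠ v → φ w ≠ c := by
      intro w hw hc
      have : w ∈ fib φ c := by simp [fib, hc]
      rw [hv, Finset.mem_singleton] at this
      exact hw this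
    refine ⟨⟨v, fun w => ⟨φ w.1, hne w.1 w.2⟩, ?_⟩, ?_⟩
    · rintro ⟨e, he⟩
      obtain ⟨w, hw⟩ := hs e
      have hwv : w ≠ v := fun hh => he (by rw [← hw, hh, hvmem])
      exact ⟨⟨w, hwv⟩, Subtype.ext hw⟩
    · apply Subtype.ext
      funext w
      simp only
      by_cases hwv : w = v
      · rw [dif_pos hwv, hwv, hvmem]
      · rw [dif_neg hwv]


variable {p n : ℕ} [Fact p.Prime]

def toPD (d : CanonicalDatum p n) : PD p n :=
  ⟨d.r, d.r_pos, d.A, d.A_nonempty, d.A_disjoint, d.S, d.S_seg, d.B, d.B_ne⟩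

lemma toPD_layer (d : CanonicalDatum p n) (i : ℕ) (x : Fin n → ZMod p) :
    (toPD d).layer i x = d.layer i x := by
  unfold PD.layer PD.An CanonicalDatum.layer toPD
  dsimp only
  split_ifs with h
  · rfl
  · simp

lemma toPD_Bn (d : CanonicalDatum p n) : (toPD d).Bn = d.Bn := rfl

lemma toPD_eval (d : CanonicalDatum p n) : (toPD d).eval = d.eval := by
  funext x
  show nestEvalAux p (fun i => (toPD d).layer i x) d.Bn d.r 0
      = nestEvalAux p (fun i => d.layer i x) d.Bn d.r 0
  rw [show (fun i => (toPD d).layer i x) = (fun i => d.layer i x) from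
      funext fun i => toPD_layer d i x]

lemma toPD_good (d : CanonicalDatum p n)
    (h : 2 ≤ (d.A ⟨d.r - 1, Nat.sub_lt d.r_pos one_pos⟩).card) : (toPD d).good := by
  unfold PD.good PD.An toPD
  dsimp only
  rw [dif_pos (Nat.sub_lt d.r_pos one_pos)]
  exact h

/-- extensionality for canonical data via ℕ-indexed projections -/
lemma CD_eq (d d' : CanonicalDatum p n) (hr : d.r = d'.r)
    (hA : ∀ i : ℕ, (toPD d).An i = (toPD d').An i)
    (hB : ∀ i : ℕ, (toPD d).Bn i = (toPD d').Bn i)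
    (hS : d.S = d'.S) : d = d' := by
  obtain ⟨r, rp, rle, A, An_, Ad, Ac, S, Ss, B, Bn_, lc⟩ := d
  obtain ⟨r', rp', rle', A', An'_, Ad', Ac', S', Ss', B', Bn'_, lc'⟩ := d'
  dsimp only at hr hA hB hS
  subst hr
  subst hS
  have hAA : A = A' := by
    funext i
    have := hA i.1
    unfold toPD PD.An at this
    dsimp only at this
    rw [dif_pos i.2, dif_pos i.2] at this
    simpa [Fin.eta] using this
  have hBB : B = B' := by
    funext i
    have := hB i.1
    unfold toPD PD.Bn at this
    dsimp only at this
    rw [dif_pos i.2, dif_pos i.2] at this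
    simpa [Fin.eta] using this
  subst hAA
  subst hBB
  rfl

def Dset : Set (CanonicalDatum p n) :=
  {d | 2 ≤ d.r ∧ 2 ≤ (d.A ⟨d.r - 1, Nat.sub_lt d.r_pos one_pos⟩).card}

lemma injOn_eval : Set.InjOn (CanonicalDatum.eval) (Dset (p := p) (n := n)) := by
  intro d hd d' hd' he
  obtain ⟨hr, hA, hB, hS⟩ := uniq (toPD d).r (toPD d) (toPD d') le_rfl
    (toPD_good d hd.2) (toPD_good d' hd'.2)
    (by rw [toPD_eval, toPD_eval]; exact he)
  refine CD_eq d d' hr hA hB ?_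
  funext j
  obtain ⟨i, hi⟩ := d.A_cover j
  refine hS j i.1 ?_
  rw [show (toPD d).An i.1 = d.A i from by
    unfold toPD PD.An; dsimp only; rw [dif_pos i.2]]
  exact hi

lemma set_eq_image :
    {f : (Fin n → ZMod p) → ZMod p |
        ∃ d : CanonicalDatum p n, 2 ≤ d.r ∧
          2 ≤ (d.A ⟨d.r - 1, Nat.sub_lt d.r_pos one_pos⟩).card ∧ f = d.eval}
      = CanonicalDatum.eval '' (Dset (p := p) (n := n)) := by
  ext f
  simp only [Set.mem_setOf_eq, Set.mem_image, Dset]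
  constructor
  · rintro ⟨d, h1, h2, h3⟩
    exact ⟨d, ⟨h1, h2⟩, h3.symm⟩
  · rintro ⟨d, ⟨h1, h2⟩, h3⟩
    exact ⟨d, h1, h2, h3.symm⟩


open Finset
variable {p n : ℕ} [Fact p.Prime]

def fibv {n m : ℕ} (φ : Fin n → Fin m) (k : ℕ) : Finset (Fin n) :=
  univ.filter (fun v => (φ v : ℕ) = k)

lemma fib_eq_fibv {n m : ℕ} (φ : Fin n → Fin m) (c : Fin m) : fib φ c = fibv φ c.1 := by
  ext v
  simp [fib, fibv, Fin.ext_iff]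

/-- parameter space -/
def Param (p n : ℕ) : Type :=
  Σ _m : {m : ℕ // m ∈ Finset.Icc 2 n},
    {φ : Fin n → Fin _m.1 // Function.Surjective φ ∧ 2 ≤ (fibv φ (_m.1 - 1)).card}
    × (Fin n → {S : Finset (ZMod p) // IsSegment p S})
    × {B : Fin (_m.1 + 1) → ZMod p // ∀ i : Fin (_m.1 + 1), 0 < (i : ℕ) → B i ≠ 0}

instance : Finite (Param p n) := by
  unfold Param
  infer_instance

def GFun : Param p n → ↥(Dset (p := p) (n := n))
  | ⟨mm, ⟨φ, hφ, hfib⟩, Sg, B⟩ =>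
    ⟨{ r := mm.1
       r_pos := by have := (Finset.mem_Icc.1 mm.2).1; omega
       r_le := (Finset.mem_Icc.1 mm.2).2
       A := fun i => fib φ i
       A_nonempty := fun i => by
         obtain ⟨v, hv⟩ := hφ i
         exact ⟨v, by simp [fib, hv]⟩
       A_disjoint := fun i j hij => by
         rw [Finset.disjoint_left]
         intro v hvi hvj
         simp only [fib, Finset.mem_filter, Finset.mem_univ, true_and] at hvi hvj
         exact hij (hvi ▸ hvj)
       A_cover := fun v => ⟨φ v, by simp [fib]⟩
       S := fun j => (Sg j).1
       S_seg := fun j => (Sg j).2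
       B := B.1
       B_ne := B.2
       last_cond := fun hcard => by
         exfalso
         have hpos : 1 ≤ mm.1 := by have := (Finset.mem_Icc.1 mm.2).1; omega
         have hc2 : (fib φ (⟨mm.1 - 1, Nat.sub_lt hpos one_pos⟩ : Fin mm.1)).card = 1 :=
           hcard
         rw [fib_eq_fibv] at hc2
         have hc3 : (fibv φ (mm.1 - 1)).card = 1 := hc2
         omega },
     ⟨(Finset.mem_Icc.1 mm.2).1, by
        have hpos : 1 ≤ mm.1 := by have := (Finset.mem_Icc.1 mm.2).1; omega
        have h2 : 2 ≤ (fib φ (⟨mm.1 - 1, Nat.sub_lt hpos one_pos⟩ : Fin mm.1)).card := by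
          rw [fib_eq_fibv]
          exact hfib
        exact h2⟩⟩

lemma GFun_bij : Function.Bijective (GFun (p := p) (n := n)) := by
  constructor
  · rintro ⟨mm, ⟨φ, hφ, hfib⟩, Sg, B⟩ ⟨mm', ⟨φ', hφ', hfib'⟩, Sg', B'⟩ h
    have hD := congrArg Subtype.val h
    simp only [GFun] at hD
    have hr : mm = mm' := Subtype.ext (congrArg CanonicalDatum.r hD)
    subst hr
    have hAn : ∀ c : Fin mm.1, fib φ c = fib φ' c := by
      intro c
      have h1 := congrArg (fun d : CanonicalDatum p n => (toPD d).An c.1) hD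
      simp only [toPD, PD.An] at h1
      simp only [c.2, ↓reduceDIte] at h1
      simpa using h1
    have hφφ : φ = φ' := by
      funext v
      have hv : v ∈ fib φ (φ v) := by simp [fib]
      rw [hAn (φ v)] at hv
      simp only [fib, Finset.mem_filter, Finset.mem_univ, true_and] at hv
      exact hv.symm
    subst hφφ
    have hSg : Sg = Sg' := by
      funext j
      exact Subtype.ext (congrArg (fun d : CanonicalDatum p n => d.S j) hD)
    subst hSg
    have hBB : B = B' := by
      apply Subtype.ext
      funext i
      have h1 := congrArg (fun d : CanonicalDatum p n => (toPD d).Bn i.1) hD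
      simp only [toPD, PD.Bn] at h1
      simp only [i.2, ↓reduceDIte] at h1
      simpa using h1
    subst hBB
    rfl
  · rintro ⟨d, hd1, hd2⟩
    have hmem : d.r ∈ Finset.Icc 2 n := Finset.mem_Icc.2 ⟨hd1, d.r_le⟩
    set φ : Fin n → Fin d.r := fun v => (d.A_cover v).choose with hφdef
    have hspec : ∀ v, v ∈ d.A (φ v) := fun v => (d.A_cover v).choose_spec
    have huniq : ∀ v i, v ∈ d.A i → φ v = i := by
      intro v i hv
      by_contra hne
      exact Finset.disjoint_left.1 (d.A_disjoint _ _ hne) (hspec v) hv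
    have hfibA : ∀ c, fib φ c = d.A c := by
      intro c
      ext v
      simp only [fib, Finset.mem_filter, Finset.mem_univ, true_and]
      constructor
      · rintro rfl; exact hspec v
      · exact huniq v c
    have hsurj : Function.Surjective φ := by
      intro c
      obtain ⟨v, hv⟩ := d.A_nonempty c
      exact ⟨v, huniq v c hv⟩
    have hfib2 : 2 ≤ (fibv φ (d.r - 1)).card := by
      rw [← fib_eq_fibv φ ⟨d.r - 1, Nat.sub_lt d.r_pos one_pos⟩, hfibA]
      exact hd2
    refine ⟨⟨⟨d.r, hmem⟩, ⟨φ, hsurj, hfib2⟩, fun j => ⟨d.S j, d.S_seg j⟩, ⟨d.B, d.B_ne⟩⟩,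
      Subtype.ext ?_⟩
    simp only [GFun]
    apply CD_eq
    · rfl
    · intro i
      show (if h : i < d.r then fib φ ⟨i, h⟩ else ∅)
          = (if h : i < d.r then d.A ⟨i, h⟩ else ∅)
      split_ifs with h1
      · exact hfibA _
      · rfl
    · intro i
      rfl
    · rfl

/-- the counting function for "surjections with big last fiber" -/
noncomputable def N2f (n m : ℕ) : ℕ :=
  Nat.card {φ : Fin n → Fin m // Function.Surjective φ ∧ 2 ≤ (fibv φ (m - 1)).card}

lemma card_Dset :
    Nat.card ↥(Dset (p := p) (n := n))
      = ∑ m ∈ Finset.Icc 2 n, N2f n m * ((2 * (p-1))^n * (p * (p-1)^m)) := by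
  classical
  rw [← Nat.card_eq_of_bijective _ (GFun_bij (p := p) (n := n))]
  unfold Param
  rw [natCard_sigma']
  rw [← Finset.sum_coe_sort (Finset.Icc 2 n)
    (fun m => N2f n m * ((2 * (p-1))^n * (p * (p-1)^m)))]
  refine Finset.sum_congr rfl fun x _ => ?_
  rw [Nat.card_prod, Nat.card_prod]
  have h2 : Nat.card (Fin n → {S : Finset (ZMod p) // IsSegment p S}) = (2*(p-1))^n := by
    rw [Nat.card_fun, card_seg]
    simp
  have h3 := card_Bsp p x.1
  rw [show Nat.card {φ : Fin n → Fin x.1 // Function.Surjective φ ∧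
      2 ≤ (fibv φ (x.1 - 1)).card} = N2f n x.1 from rfl, h2, h3]


open Finset

noncomputable def W (a b : ℕ) : ℚ :=
  ∑ t ∈ Finset.range (b + 1), (-1 : ℚ) ^ t * (b.choose t : ℚ) * ((b - t : ℕ) : ℚ) ^ a

lemma W_eq_stirling (a b : ℕ) : (b.factorial : ℚ) * stirling2 a b = W a b := by
  rw [stirling2, W, mul_comm, div_mul_cancel₀]
  exact_mod_cast b.factorial_ne_zero

lemma card_surj_fin (a b : ℕ) :
    (Nat.card {φ : Fin a → Fin b // Function.Surjective φ} : ℚ) = W a b := by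
  have := card_surj_formula (Fin a) (Fin b)
  simpa [Fintype.card_fin, W] using this

lemma card_ne_one {α : Type*} [Fintype α] [DecidableEq α] (v : α) :
    Fintype.card {w : α // w ≠ v} = Fintype.card α - 1 := by
  have : Fintype.card {w : α // ¬ (w = v)} = Fintype.card α - Fintype.card {w : α // w = v} :=
    Fintype.card_subtype_compl _
  rw [Fintype.card_subtype_eq] at this
  exact this

lemma card_single_q (a b : ℕ) (c : Fin b) :
    (Nat.card {φ : Fin a → Fin b // Function.Surjective φ ∧ (fib φ c).card = 1} : ℚ)
      = a * W (a - 1) (b - 1) := by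
  classical
  rw [card_single c]
  push_cast
  have hterm : ∀ v : Fin a,
      (Nat.card {ψ : {w : Fin a // w ≠ v} → {e : Fin b // e ≠ c} // Function.Surjective ψ} : ℚ)
        = W (a - 1) (b - 1) := by
    intro v
    have := card_surj_formula {w : Fin a // w ≠ v} {e : Fin b // e ≠ c}
    rw [card_ne_one, card_ne_one, Fintype.card_fin, Fintype.card_fin] at this
    rw [this]
    rfl
  rw [Finset.sum_congr rfl (fun v _ => hterm v), Finset.sum_const, Finset.card_univ,
    Fintype.card_fin, nsmul_eq_mul]

lemma N2f_q (a b : ℕ) (hb : 1 ≤ b) :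
    (N2f a b : ℚ) = W a b - a * W (a - 1) (b - 1) := by
  classical
  have hsplit := card_split (n := a) (r := b) hb ⟨b - 1, Nat.sub_lt hb one_pos⟩
  have hX : Nat.card {φ : Fin a → Fin b // Function.Surjective φ ∧
      2 ≤ (fib φ ⟨b - 1, Nat.sub_lt hb one_pos⟩).card} = N2f a b := by
    apply Nat.card_congr
    apply Equiv.subtypeEquivRight
    intro φ
    rw [fib_eq_fibv]
  rw [hX] at hsplit
  have hq := congrArg (fun k : ℕ => (k : ℚ)) hsplit
  push_cast at hq
  rw [card_surj_fin, card_single_q] at hq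
  linarith

lemma N2f_top (a : ℕ) : N2f a a = 0 := by
  have he : IsEmpty {φ : Fin a → Fin a // Function.Surjective φ ∧
      2 ≤ (fibv φ (a - 1)).card} := by
    constructor
    rintro ⟨φ, hs, h2⟩
    have hinj : Function.Injective φ := Finite.injective_iff_surjective.2 hs
    have hle : (fibv φ (a - 1)).card ≤ 1 := by
      apply Finset.card_le_one.2
      intro x hx y hy
      simp only [fibv, Finset.mem_filter, Finset.mem_univ, true_and] at hx hy
      exact hinj (Fin.ext (hx.trans hy.symm))
    omega
  exact Nat.card_of_isEmpty


end Stmt18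
/-- the number of functions defined by a canonical datum with layer number
`r ≥ 2` and `k_r ≥ 2` equals
`2^n p (p−1)^n ∑_{r=2}^{n−1} (p−1)^r [r! S(n,r) − n·(r−1)! S(n−1,r−1)]`. -/
theorem stmt18 (p n : ℕ) [Fact (Nat.Prime p)] (hn : 2 ≤ n) :
    (Set.ncard {f : (Fin n → ZMod p) → ZMod p |
        ∃ d : CanonicalDatum p n, 2 ≤ d.r ∧
          2 ≤ (d.A ⟨d.r - 1, Nat.sub_lt d.r_pos one_pos⟩).card ∧ f = d.eval} : ℚ) =
      2 ^ n * (p : ℚ) * ((p : ℚ) - 1) ^ n *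
        ∑ r ∈ Finset.Icc 2 (n - 1), ((p : ℚ) - 1) ^ r *
          ((r.factorial : ℚ) * stirling2 n r -
            (n : ℚ) * ((r - 1).factorial : ℚ) * stirling2 (n - 1) (r - 1)) := by
  classical
  have hp2 : 2 ≤ p := (Fact.out : p.Prime).two_le
  have hp1 : 1 ≤ p := by omega
  rw [Stmt18.set_eq_image, Set.ncard_image_of_injOn Stmt18.injOn_eval,
    ← Nat.card_coe_set_eq, Stmt18.card_Dset, Nat.cast_sum]
  have hcast : ∀ m ∈ Finset.Icc 2 n,
      ((Stmt18.N2f n m * ((2 * (p-1))^n * (p * (p-1)^m)) : ℕ) : ℚ)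
        = (Stmt18.N2f n m : ℚ) * ((2 * ((p:ℚ) - 1))^n * ((p:ℚ) * ((p:ℚ)-1)^m)) := by
    intro m _
    push_cast [Nat.cast_sub hp1]
    ring
  rw [Finset.sum_congr rfl hcast]
  have hsum := Finset.sum_Icc_succ_top (a := 2) (b := n - 1)
    (by omega : 2 ≤ n - 1 + 1)
    (fun m => (Stmt18.N2f n m : ℚ) * ((2 * ((p:ℚ) - 1))^n * ((p:ℚ) * ((p:ℚ)-1)^m)))
  rw [show n - 1 + 1 = n from by omega] at hsum
  rw [hsum, Stmt18.N2f_top]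
  simp only [Nat.cast_zero, zero_mul, add_zero]
  rw [Finset.mul_sum]
  refine Finset.sum_congr rfl fun m hm => ?_
  obtain ⟨hm2, hm1⟩ := Finset.mem_Icc.1 hm
  rw [Stmt18.N2f_q n m (by omega), Stmt18.W_eq_stirling n m, mul_assoc ((n:ℚ)),
    Stmt18.W_eq_stirling (n-1) (m-1), mul_pow]
  ring
end
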